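/- Theorem 4.8 (i): (D([0,T]), d), where d is the metric defining the mJ1 topology, is a complete and separable (Polish) metric space. -/

import Mathlib

open MeasureTheory Filter Set Topology

noncomputable section

/-- `x` is càdlàg on `[0,T]`: right-continuous at every `t ∈ [0,T)` and
admitting a left limit at every `t ∈ (0,T]`. -/
def Cadlag (T : ℝ) (x : ℝ → ℝ) : Prop :=
  (∀ t ∈ Set.Ico (0:ℝ) T, Filter.Tendsto x (nhdsWithin t (Set.Ioi t)) (nhds (x t))) ∧
  (∀ t ∈ Set.Ioc (0:ℝ) T, ∃ L : ℝ, Filter.Tendsto x (nhdsWithin t (Set.Iio t)) (nhds L))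

/-- membership in `𝕍`: càdlàg of finite total variation on `[0,T]`. -/
def MemV (T : ℝ) (v : ℝ → ℝ) : Prop :=
  Cadlag T v ∧ BoundedVariationOn v (Set.Icc 0 T)

/-- `μ` is the finite signed (Lebesgue–Stieltjes) measure induced by `v` on `[0,T]`:
`μ([0,t]) = v(t)` for `t ∈ [0,T]`, and `μ` vanishes outside `[0,T]`. -/
def Represents (T : ℝ) (μ : MeasureTheory.SignedMeasure ℝ) (v : ℝ → ℝ) : Prop :=
  (∀ t ∈ Set.Icc (0:ℝ) T, μ (Set.Icc 0 t) = v t) ∧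
  (∀ s : Set ℝ, MeasurableSet s → s ∩ Set.Icc (0:ℝ) T = ∅ → μ s = 0)

/-- Integral of `f` against a signed measure. -/
noncomputable def sInt (μ : MeasureTheory.SignedMeasure ℝ) (f : ℝ → ℝ) : ℝ :=
  (∫ t, f t ∂μ.toJordanDecomposition.posPart) - (∫ t, f t ∂μ.toJordanDecomposition.negPart)

/-- `∫_{[0,T]} f dv` : integral of `f` with respect to the Lebesgue–Stieltjes
signed measure induced by `v` on `[0,T]`. -/
noncomputable def intD (T : ℝ) (f v : ℝ → ℝ) : ℝ :=
  letI := Classical.propDecidable (∃ μ : MeasureTheory.SignedMeasure ℝ, Represents T μ v)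
  if h : ∃ μ : MeasureTheory.SignedMeasure ℝ, Represents T μ v then sInt h.choose f else 0

/-- S-convergence `x_n →_S x₀` on `D([0,T])`. -/
def SConv (T : ℝ) (x : ℕ → ℝ → ℝ) (x₀ : ℝ → ℝ) : Prop :=
  ∀ ε > (0:ℝ), ∃ v : ℕ → ℝ → ℝ, ∃ v₀ : ℝ → ℝ,
    (∀ n, MemV T (v n)) ∧ MemV T v₀ ∧
    (∀ n, ∀ t ∈ Set.Icc (0:ℝ) T, |x n t - v n t| ≤ ε) ∧
    (∀ t ∈ Set.Icc (0:ℝ) T, |x₀ t - v₀ t| ≤ ε) ∧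
    (∀ f : ℝ → ℝ, Continuous f →
      Filter.Tendsto (fun n => intD T f (v n)) Filter.atTop (nhds (intD T f v₀)))

/-- `x_n ⇒*_S x₀` : every subsequence contains a further subsequence `→_S`-converging to `x₀`. -/
def SStarConv (T : ℝ) (x : ℕ → ℝ → ℝ) (x₀ : ℝ → ℝ) : Prop :=
  ∀ φ : ℕ → ℕ, StrictMono φ →
    ∃ ψ : ℕ → ℕ, StrictMono ψ ∧ SConv T (fun k => x (φ (ψ k))) x₀

/-- membership in `𝔸([0,T])`: continuous, of finite variation, vanishing at `0`. -/
def MemA (T : ℝ) (A : ℝ → ℝ) : Prop :=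
  ContinuousOn A (Set.Icc 0 T) ∧ BoundedVariationOn A (Set.Icc 0 T) ∧ A 0 = 0

/-- `A_n →_τ A₀` : uniform convergence on `[0,T]` together with uniformly bounded
total variations. -/
def TauConv (T : ℝ) (A : ℕ → ℝ → ℝ) (A₀ : ℝ → ℝ) : Prop :=
  TendstoUniformlyOn (fun n => A n) A₀ Filter.atTop (Set.Icc 0 T) ∧
  ∃ M : ℝ, ∀ n, eVariationOn (A n) (Set.Icc 0 T) ≤ ENNReal.ofReal M

/-- `x` has (at least) `k` up-crossings of the levels `a < b` on `[0,T]`. -/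
def HasUpcrossings (T a b : ℝ) (x : ℝ → ℝ) (k : ℕ) : Prop :=
  ∃ s u : Fin k → ℝ, (∀ i, 0 ≤ s i ∧ s i < u i ∧ u i ≤ T) ∧
    (∀ i j : Fin k, i < j → u i < s j) ∧
    (∀ i, x (s i) < a ∧ b < x (u i))

/-- `x` has (at least) `k` `η`-oscillations on `[0,T]`. -/
def HasOscillations (T η : ℝ) (x : ℝ → ℝ) (k : ℕ) : Prop :=
  ∃ s u : Fin k → ℝ, (∀ i, 0 ≤ s i ∧ s i < u i ∧ u i ≤ T) ∧
    (∀ i j : Fin k, i < j → u i ≤ s j) ∧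
    (∀ i, |x (u i) - x (s i)| > η)


/-- extension of `x ∈ D([0,T])` to a function which is `0` before `0` and
constantly `x T` after `T`. -/
def extFn (T : ℝ) (x : ℝ → ℝ) : ℝ → ℝ := fun t =>
  if t < 0 then 0 else if t < T then x t else x T

/-- `l` is an admissible time change of `[a,b]`: a strictly increasing continuous
bijection of `[a,b]` onto itself. -/
def TimeChange (a b : ℝ) (l : ℝ → ℝ) : Prop :=
  ContinuousOn l (Set.Icc a b) ∧ StrictMonoOn l (Set.Icc a b) ∧
    l a = a ∧ l b = b ∧ Set.MapsTo l (Set.Icc a b) (Set.Icc a b)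

/-- Billingsley's complete metric for the `J₁` topology on `D([a,b])`:
`d_Sk(x,y)` is the infimum, over time changes `l` of `[a,b]`, of the maximum of
`sup_{s<t} |log((l t - l s)/(t - s))|` and `sup_t |x t - y (l t)|`. -/
noncomputable def dSk (a b : ℝ) (x y : ℝ → ℝ) : ℝ :=
  sInf {r : ℝ | 0 ≤ r ∧ ∃ l : ℝ → ℝ, TimeChange a b l ∧
    (∀ s ∈ Set.Icc a b, ∀ t ∈ Set.Icc a b, s < t →
      |Real.log ((l t - l s) / (t - s))| ≤ r) ∧
    (∀ t ∈ Set.Icc a b, |x t - y (l t)| ≤ r)}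

/-- the metric of the `mJ₁` topology on `D([0,T])` (with parameter `ε > 0`). -/
noncomputable def dmJ (T ε : ℝ) (x y : ℝ → ℝ) : ℝ :=
  dSk (-ε) (T + ε) (extFn T x) (extFn T y)

namespace SkAux
open Real

/-- The defining set of `dSk`. -/
def SkSet (a b : ℝ) (x y : ℝ → ℝ) : Set ℝ :=
  {r : ℝ | 0 ≤ r ∧ ∃ l : ℝ → ℝ, TimeChange a b l ∧
    (∀ s ∈ Set.Icc a b, ∀ t ∈ Set.Icc a b, s < t →
      |Real.log ((l t - l s) / (t - s))| ≤ r) ∧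
    (∀ t ∈ Set.Icc a b, |x t - y (l t)| ≤ r)}

lemma dSk_eq (a b : ℝ) (x y : ℝ → ℝ) : dSk a b x y = sInf (SkSet a b x y) := rfl

lemma SkSet_bddBelow (a b : ℝ) (x y : ℝ → ℝ) : BddBelow (SkSet a b x y) :=
  ⟨0, fun _ hr => hr.1⟩

lemma dSk_nonneg (a b : ℝ) (x y : ℝ → ℝ) : 0 ≤ dSk a b x y :=
  Real.sInf_nonneg (fun _ hr => hr.1)

/-- sandwich condition on increments. -/
def Sand (a b r : ℝ) (l : ℝ → ℝ) : Prop :=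
  ∀ s ∈ Set.Icc a b, ∀ t ∈ Set.Icc a b, s < t →
    Real.exp (-r) * (t - s) ≤ l t - l s ∧ l t - l s ≤ Real.exp r * (t - s)

def GoodTC (a b r : ℝ) (l : ℝ → ℝ) : Prop :=
  0 ≤ r ∧ TimeChange a b l ∧ Sand a b r l

lemma GoodTC.log_bound {a b r : ℝ} {l : ℝ → ℝ} (h : GoodTC a b r l) :
    ∀ s ∈ Set.Icc a b, ∀ t ∈ Set.Icc a b, s < t →
      |Real.log ((l t - l s) / (t - s))| ≤ r := by
  intro s hs t ht hst
  obtain ⟨h1, h2⟩ := h.2.2 s hs t ht hst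
  have hts : (0:ℝ) < t - s := by linarith
  have hpos : 0 < l t - l s := lt_of_lt_of_le (by positivity) h1
  have hratio : 0 < (l t - l s) / (t - s) := div_pos hpos hts
  rw [abs_le]
  constructor
  · rw [Real.le_log_iff_exp_le hratio, le_div_iff₀ hts]
    linarith
  · rw [Real.log_le_iff_le_exp hratio, div_le_iff₀ hts]
    linarith

lemma sand_of_log {a b r : ℝ} {l : ℝ → ℝ} (hmono : StrictMonoOn l (Set.Icc a b))
    (hlog : ∀ s ∈ Set.Icc a b, ∀ t ∈ Set.Icc a b, s < t →
      |Real.log ((l t - l s) / (t - s))| ≤ r) : Sand a b r l := by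
  intro s hs t ht hst
  have hts : (0:ℝ) < t - s := by linarith
  have hpos : 0 < l t - l s := sub_pos.2 (hmono hs ht hst)
  have hratio : 0 < (l t - l s) / (t - s) := div_pos hpos hts
  obtain ⟨h1, h2⟩ := abs_le.1 (hlog s hs t ht hst)
  constructor
  · have hle : Real.exp (-r) ≤ (l t - l s) / (t - s) := by
      rw [← Real.exp_log hratio]; exact Real.exp_le_exp.2 h1
    calc Real.exp (-r) * (t - s) ≤ ((l t - l s) / (t - s)) * (t - s) :=
          mul_le_mul_of_nonneg_right hle hts.le
    _ = l t - l s := div_mul_cancel₀ _ hts.ne'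
  · have hle : (l t - l s) / (t - s) ≤ Real.exp r := by
      rw [← Real.exp_log hratio]; exact Real.exp_le_exp.2 h2
    calc l t - l s = ((l t - l s) / (t - s)) * (t - s) := (div_mul_cancel₀ _ hts.ne').symm
    _ ≤ Real.exp r * (t - s) := mul_le_mul_of_nonneg_right hle hts.le

lemma GoodTC.strictMonoOn {a b r : ℝ} {l : ℝ → ℝ} (h : GoodTC a b r l) :
    StrictMonoOn l (Set.Icc a b) := h.2.1.2.1

lemma GoodTC.mapsTo {a b r : ℝ} {l : ℝ → ℝ} (h : GoodTC a b r l) :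
    Set.MapsTo l (Set.Icc a b) (Set.Icc a b) := h.2.1.2.2.2.2

lemma goodTC_id (a b : ℝ) : GoodTC a b 0 id := by
  refine ⟨le_refl _, ⟨continuousOn_id, fun u _ v _ huv => huv, rfl, rfl, fun u hu => hu⟩, ?_⟩
  intro s hs t ht hst
  simp [Real.exp_zero]

lemma GoodTC.mono {a b r r' : ℝ} {l : ℝ → ℝ} (h : GoodTC a b r l) (hrr : r ≤ r') :
    GoodTC a b r' l := by
  refine ⟨le_trans h.1 hrr, h.2.1, ?_⟩
  intro s hs t ht hst
  obtain ⟨h1, h2⟩ := h.2.2 s hs t ht hst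
  have hts : (0:ℝ) ≤ t - s := by linarith
  constructor
  · exact le_trans (mul_le_mul_of_nonneg_right (Real.exp_le_exp.2 (by linarith)) hts) h1
  · exact le_trans h2 (mul_le_mul_of_nonneg_right (Real.exp_le_exp.2 hrr) hts)

lemma GoodTC.comp {a b r1 r2 : ℝ} {l1 l2 : ℝ → ℝ} (h1 : GoodTC a b r1 l1)
    (h2 : GoodTC a b r2 l2) : GoodTC a b (r1 + r2) (l2 ∘ l1) := by
  obtain ⟨hr1, ⟨hc1, hm1, ha1, hb1, hM1⟩, hs1⟩ := h1
  obtain ⟨hr2, ⟨hc2, hm2, ha2, hb2, hM2⟩, hs2⟩ := h2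
  refine ⟨by linarith, ⟨hc2.comp hc1 hM1, fun u hu v hv huv => hm2 (hM1 hu) (hM1 hv) (hm1 hu hv huv),
    by simp [Function.comp, ha1, ha2], by simp [Function.comp, hb1, hb2], hM2.comp hM1⟩, ?_⟩
  intro s hs t ht hst
  have hl1 : l1 s < l1 t := hm1 hs ht hst
  obtain ⟨g1, g2⟩ := hs1 s hs t ht hst
  obtain ⟨g3, g4⟩ := hs2 (l1 s) (hM1 hs) (l1 t) (hM1 ht) hl1
  have e1 : Real.exp (-(r1 + r2)) = Real.exp (-r2) * Real.exp (-r1) := by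
    rw [← Real.exp_add]; ring_nf
  have e2 : Real.exp (r1 + r2) = Real.exp r2 * Real.exp r1 := by
    rw [← Real.exp_add]; ring_nf
  constructor
  · rw [e1, mul_assoc]
    calc Real.exp (-r2) * (Real.exp (-r1) * (t - s)) ≤ Real.exp (-r2) * (l1 t - l1 s) :=
          mul_le_mul_of_nonneg_left g1 (Real.exp_pos _).le
    _ ≤ _ := g3
  · rw [e2, mul_assoc]
    calc l2 (l1 t) - l2 (l1 s) ≤ Real.exp r2 * (l1 t - l1 s) := g4
    _ ≤ Real.exp r2 * (Real.exp r1 * (t - s)) :=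
          mul_le_mul_of_nonneg_left g2 (Real.exp_pos _).le

lemma GoodTC.mem_SkSet {a b r r' : ℝ} {l : ℝ → ℝ} {x y : ℝ → ℝ} (h : GoodTC a b r l)
    (hr' : 0 ≤ r') (hxy : ∀ t ∈ Set.Icc a b, |x t - y (l t)| ≤ r') :
    max r r' ∈ SkSet a b x y := by
  refine ⟨le_max_of_le_right hr', l, h.2.1, ?_, ?_⟩
  · intro s hs t ht hst
    exact le_trans (h.log_bound s hs t ht hst) (le_max_left _ _)
  · intro t ht
    exact le_trans (hxy t ht) (le_max_right _ _)

lemma dSk_le_of_good {a b r r' : ℝ} {l : ℝ → ℝ} {x y : ℝ → ℝ} (h : GoodTC a b r l)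
    (hr' : 0 ≤ r') (hxy : ∀ t ∈ Set.Icc a b, |x t - y (l t)| ≤ r') :
    dSk a b x y ≤ max r r' :=
  csInf_le (SkSet_bddBelow a b x y) (h.mem_SkSet hr' hxy)

/-- displacement bound. -/
lemma GoodTC.dist_le {a b r : ℝ} {l : ℝ → ℝ} (h : GoodTC a b r l) {t : ℝ}
    (ht : t ∈ Set.Icc a b) : |l t - t| ≤ (b - a) * (Real.exp r - 1) := by
  have ha : l a = a := h.2.1.2.2.1
  have hab : a ≤ b := ht.1.trans ht.2
  have h1r : 1 ≤ Real.exp r := by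
    have := Real.add_one_le_exp r; linarith [h.1]
  have hmul : Real.exp (-r) * Real.exp r = 1 := by rw [← Real.exp_add]; simp
  have key : 1 - Real.exp (-r) ≤ Real.exp r - 1 := by nlinarith [Real.exp_pos r]
  rcases eq_or_lt_of_le ht.1 with hta | hta
  · rw [← hta, ha]
    simp only [sub_self, abs_zero]
    exact mul_nonneg (by linarith) (by linarith)
  · obtain ⟨g1, g2⟩ := h.2.2 a (Set.left_mem_Icc.2 hab) t ht hta
    rw [ha] at g1 g2
    rw [abs_le]
    have hta' : t - a ≤ b - a := by linarith [ht.2]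
    have hta0 : (0:ℝ) ≤ t - a := by linarith
    constructor
    · nlinarith [Real.exp_pos (-r)]
    · nlinarith

end SkAux
namespace SkAux

/-- inverse of a good time change. -/
lemma GoodTC.inverse {a b r : ℝ} {l : ℝ → ℝ} (h : GoodTC a b r l) (hab : a < b) :
    ∃ g : ℝ → ℝ, GoodTC a b r g ∧ (∀ t ∈ Set.Icc a b, g (l t) = t) ∧
      (∀ t ∈ Set.Icc a b, l (g t) = t) := by
  obtain ⟨hr, ⟨hc, hm, hla, hlb, hM⟩, hsand⟩ := h
  have hsurj : ∀ y ∈ Set.Icc a b, ∃ t ∈ Set.Icc a b, l t = y := by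
    intro y hy
    have := intermediate_value_Icc hab.le hc
    rw [hla, hlb] at this
    obtain ⟨t, ht, hlt⟩ := this hy
    exact ⟨t, ht, hlt⟩
  classical
  set g : ℝ → ℝ := fun y => if hy : ∃ t ∈ Set.Icc a b, l t = y then hy.choose else y with hg
  have hginv : ∀ y ∈ Set.Icc a b, g y ∈ Set.Icc a b ∧ l (g y) = y := by
    intro y hy
    have hy' := hsurj y hy
    simp only [hg, dif_pos hy']
    exact ⟨hy'.choose_spec.1, hy'.choose_spec.2⟩
  have hinj : Set.InjOn l (Set.Icc a b) := hm.injOn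
  have hgl : ∀ t ∈ Set.Icc a b, g (l t) = t := by
    intro t ht
    have h1 := hginv (l t) (hM ht)
    exact hinj h1.1 ht h1.2
  have hgm : StrictMonoOn g (Set.Icc a b) := by
    intro y1 h1 y2 h2 h12
    by_contra hcon
    push_neg at hcon
    have := hm.monotoneOn (hginv y2 h2).1 (hginv y1 h1).1 hcon
    rw [(hginv y1 h1).2, (hginv y2 h2).2] at this
    exact absurd this (not_le.2 h12)
  have hgsand : Sand a b r g := by
    intro s hs t ht hst
    have hgs := hginv s hs
    have hgt := hginv t ht
    have hglt : g s < g t := hgm hs ht hst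
    obtain ⟨k1, k2⟩ := hsand (g s) hgs.1 (g t) hgt.1 hglt
    rw [hgs.2, hgt.2] at k1 k2
    have hepos := Real.exp_pos r
    have henpos := Real.exp_pos (-r)
    have hmul : Real.exp (-r) * Real.exp r = 1 := by rw [← Real.exp_add]; simp
    constructor
    · nlinarith
    · nlinarith
  have hga : g a = a := by
    have := hgl a (Set.left_mem_Icc.2 hab.le); rwa [hla] at this
  have hgb : g b = b := by
    have := hgl b (Set.right_mem_Icc.2 hab.le); rwa [hlb] at this
  have hgc : ContinuousOn g (Set.Icc a b) := by
    have hlip : LipschitzOnWith (Real.exp r).toNNReal g (Set.Icc a b) := by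
      rw [lipschitzOnWith_iff_dist_le_mul]
      intro y1 h1 y2 h2
      rw [Real.coe_toNNReal _ (Real.exp_pos r).le, Real.dist_eq, Real.dist_eq]
      rcases lt_trichotomy y1 y2 with hlt | heq | hgt
      · obtain ⟨k1, _⟩ := hgsand y1 h1 y2 h2 hlt
        have : g y1 ≤ g y2 := (hgm.monotoneOn) h1 h2 hlt.le
        rw [abs_of_nonpos (by linarith), abs_of_neg (by linarith)]
        nlinarith [Real.exp_pos (-r), Real.exp_pos r,
          (by rw [← Real.exp_add]; simp : Real.exp (-r) * Real.exp r = 1),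
          hgsand y1 h1 y2 h2 hlt]
      · simp [heq]
      · obtain ⟨k1, k2⟩ := hgsand y2 h2 y1 h1 hgt
        have k1' : g y2 ≤ g y1 := (hgm.monotoneOn) h2 h1 hgt.le
        rw [abs_of_nonneg (by linarith), abs_of_pos (by linarith)]
        nlinarith [Real.exp_pos (-r), Real.exp_pos r,
          (by rw [← Real.exp_add]; simp : Real.exp (-r) * Real.exp r = 1)]
    exact hlip.continuousOn
  refine ⟨g, ⟨hr, ⟨hgc, hgm, hga, hgb, fun y hy => (hginv y hy).1⟩, hgsand⟩, hgl,
    fun t ht => (hginv t ht).2⟩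

/-- oscillation partition lemma for càdlàg functions. -/
lemma cadlag_partition {T : ℝ} {x : ℝ → ℝ} (hx : Cadlag T x) (hT : 0 < T) {δ : ℝ}
    (hδ : 0 < δ) :
    ∃ n : ℕ, ∃ t : ℕ → ℝ, t 0 = 0 ∧ t n = T ∧ (∀ i < n, t i < t (i + 1)) ∧
      (∀ i < n, ∀ s ∈ Set.Ico (t i) (t (i + 1)), ∀ u ∈ Set.Ico (t i) (t (i + 1)),
        |x s - x u| ≤ δ) := by
  set A : Set ℝ := {τ | τ ∈ Set.Icc 0 T ∧ ∃ n : ℕ, ∃ t : ℕ → ℝ, t 0 = 0 ∧ t n = τ ∧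
    (∀ i < n, t i < t (i + 1)) ∧
    (∀ i < n, ∀ s ∈ Set.Ico (t i) (t (i + 1)), ∀ u ∈ Set.Ico (t i) (t (i + 1)),
      |x s - x u| ≤ δ)} with hA
  have h0 : (0:ℝ) ∈ A := by
    refine ⟨⟨le_refl _, hT.le⟩, 0, fun _ => 0, rfl, rfl, ?_, ?_⟩ <;> intro i hi <;> omega
  have hne : A.Nonempty := ⟨0, h0⟩
  have hbdd : BddAbove A := ⟨T, fun τ hτ => hτ.1.2⟩
  set τ := sSup A with hτdef
  have hτmem : τ ∈ Set.Icc 0 T := ⟨le_csSup hbdd h0, csSup_le hne (fun y hy => hy.1.2)⟩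
  -- extension step: if σ ∈ A, σ < σ' ≤ T and osc of x on [σ, σ') ≤ δ, then σ' ∈ A
  have hext : ∀ σ ∈ A, ∀ σ', σ < σ' → σ' ≤ T →
      (∀ s ∈ Set.Ico σ σ', ∀ u ∈ Set.Ico σ σ', |x s - x u| ≤ δ) → σ' ∈ A := by
    rintro σ ⟨hσI, n, t, ht0, htn, htm, hto⟩ σ' hσσ' hσ'T hosc
    refine ⟨⟨le_trans hσI.1 (le_of_lt hσσ'), hσ'T⟩, n + 1,
      fun i => if i ≤ n then t i else σ', ?_, ?_, ?_, ?_⟩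
    · simp [ht0]
    · simp
    · intro i hi
      rcases Nat.lt_or_ge i n with hin | hin
      · simp only [if_pos (le_of_lt hin), if_pos (Nat.succ_le_of_lt hin)]
        exact htm i hin
      · have hieq : i = n := by omega
        rw [hieq]
        beta_reduce
        rw [if_pos (le_refl n), if_neg (by omega : ¬ n + 1 ≤ n), htn]
        exact hσσ'
    · intro i hi
      rcases Nat.lt_or_ge i n with hin | hin
      · simp only [if_pos (le_of_lt hin), if_pos (Nat.succ_le_of_lt hin)]
        exact hto i hin
      · have hieq : i = n := by omega
        rw [hieq]
        beta_reduce
        rw [if_pos (le_refl n), if_neg (by omega : ¬ n + 1 ≤ n), htn]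
        exact hosc
  -- τ ∈ A
  have hτA : τ ∈ A := by
    rcases eq_or_lt_of_le hτmem.1 with h0τ | h0τ
    · rw [← h0τ]; exact h0
    · obtain ⟨L, hL⟩ := hx.2 τ ⟨h0τ, hτmem.2⟩
      have hev : ∀ᶠ s in nhdsWithin τ (Set.Iio τ), |x s - L| ≤ δ / 2 := by
        have := hL (Metric.closedBall_mem_nhds L (by linarith : (0:ℝ) < δ/2))
        filter_upwards [this] with s hs
        simpa [Real.dist_eq] using hs
      obtain ⟨η, hη, hηsub⟩ := mem_nhdsLT_iff_exists_Ioo_subset.1 hev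
      have hη' : η < τ := Set.mem_Iio.1 hη
      obtain ⟨σ, hσA, hσ⟩ := exists_lt_of_lt_csSup hne (show max η ((η + τ)/2) < τ by
        rw [max_lt_iff]
        exact ⟨hη', by linarith⟩)
      have hστ : σ ≤ τ := le_csSup hbdd hσA
      rcases eq_or_lt_of_le hστ with heq | hlt
      · rw [← heq]; exact hσA
      · refine hext σ hσA τ hlt hτmem.2 ?_
        intro s hs u hu
        have hsV : s ∈ Set.Ioo η τ := ⟨lt_of_le_of_lt (le_max_left _ _) (lt_of_lt_of_le hσ hs.1), hs.2⟩
        have huV : u ∈ Set.Ioo η τ := ⟨lt_of_le_of_lt (le_max_left _ _) (lt_of_lt_of_le hσ hu.1), hu.2⟩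
        calc |x s - x u| ≤ |x s - L| + |L - x u| := abs_sub_le _ _ _
        _ ≤ δ/2 + δ/2 := add_le_add (hηsub hsV) (by rw [abs_sub_comm]; exact hηsub huV)
        _ = δ := by ring
  -- τ = T
  rcases eq_or_lt_of_le hτmem.2 with hτT | hτT
  · obtain ⟨_, n, t, h1, h2, h3, h4⟩ := hτA
    exact ⟨n, t, h1, by rw [h2, hτT], h3, h4⟩
  · exfalso
    have hrc := hx.1 τ ⟨hτmem.1, hτT⟩
    have hev : ∀ᶠ s in nhdsWithin τ (Set.Ioi τ), |x s - x τ| ≤ δ / 2 := by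
      have := hrc (Metric.closedBall_mem_nhds (x τ) (by linarith : (0:ℝ) < δ/2))
      filter_upwards [this] with s hs
      simpa [Real.dist_eq] using hs
    obtain ⟨η, hη, hηsub⟩ := mem_nhdsGT_iff_exists_Ioo_subset.1 hev
    set τ' := min ((τ + η)/2) T with hτ'
    have hη' : τ < η := Set.mem_Ioi.1 hη
    have hττ' : τ < τ' := by
      rw [hτ', lt_min_iff]
      exact ⟨by linarith, hτT⟩
    have hτ'A : τ' ∈ A := by
      refine hext τ hτA τ' hττ' (min_le_right _ _) ?_
      intro s hs u hu
      have hb : ∀ v ∈ Set.Ico τ τ', |x v - x τ| ≤ δ/2 := by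
        intro v hv
        rcases eq_or_lt_of_le hv.1 with he | hl
        · rw [← he]; simp; linarith
        · refine hηsub ⟨hl, ?_⟩
          calc v < τ' := hv.2
          _ ≤ (τ + η)/2 := min_le_left _ _
          _ < η := by linarith
      calc |x s - x u| ≤ |x s - x τ| + |x τ - x u| := abs_sub_le _ _ _
      _ ≤ δ/2 + δ/2 := add_le_add (hb s hs) (by rw [abs_sub_comm]; exact hb u hu)
      _ = δ := by ring
    exact absurd (le_csSup hbdd hτ'A) (not_le.2 hττ')

end SkAux
namespace SkAux

/-- locate a point in a partition. -/
lemma locate {n : ℕ} {t : ℕ → ℝ} (ht0 : t 0 = 0) (htm : ∀ i < n, t i < t (i + 1))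
    {u : ℝ} (hu : 0 ≤ u) (hun : u < t n) :
    ∃ i < n, t i ≤ u ∧ u < t (i + 1) := by
  classical
  set F := (Finset.range (n + 1)).filter (fun i => t i ≤ u) with hF
  have hne : F.Nonempty := ⟨0, by simp [hF, ht0, hu]⟩
  set i := F.max' hne with hi
  have hiF : i ∈ F := F.max'_mem hne
  have hile : i ≤ n := by
    have := (Finset.mem_filter.1 hiF).1
    simp only [Finset.mem_range] at this; omega
  have hti : t i ≤ u := (Finset.mem_filter.1 hiF).2
  have hin : i < n := by
    rcases eq_or_lt_of_le hile with he | hl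
    · exfalso; rw [he] at hti; linarith
    · exact hl
  refine ⟨i, hin, hti, ?_⟩
  by_contra hcon
  push_neg at hcon
  have : i + 1 ∈ F := Finset.mem_filter.2 ⟨Finset.mem_range.2 (by omega), hcon⟩
  have := F.le_max' _ this
  omega

/-- partition is monotone. -/
lemma partition_mono {n : ℕ} {t : ℕ → ℝ} (htm : ∀ i < n, t i < t (i + 1)) :
    ∀ i j, i ≤ j → j ≤ n → t i ≤ t j := by
  have key : ∀ k i, i + k ≤ n → t i ≤ t (i + k) := by
    intro k
    induction k with
    | zero => intro i _; simp
    | succ m ih =>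
      intro i h
      have h1 : t i ≤ t (i + m) := ih i (by omega)
      exact h1.trans (htm (i + m) (by omega)).le
  intro i j hij hjn
  obtain ⟨k, rfl⟩ := Nat.exists_eq_add_of_le hij
  exact key k i hjn

/-- càdlàg functions are bounded on `[0,T]`. -/
lemma cadlag_bounded {T : ℝ} {x : ℝ → ℝ} (hx : Cadlag T x) (hT : 0 < T) :
    ∃ M : ℝ, 0 ≤ M ∧ ∀ t ∈ Set.Icc 0 T, |x t| ≤ M := by
  obtain ⟨n, t, ht0, htn, htm, hto⟩ := cadlag_partition hx hT one_pos
  set M0 := ((Finset.range (n + 1)).image (fun i => |x (t i)|)).max' (by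
    refine Finset.Nonempty.image ?_ _; exact ⟨0, by simp⟩) with hM0
  have hM0le : ∀ i ≤ n, |x (t i)| ≤ M0 := by
    intro i hi
    exact Finset.le_max' _ (|x (t i)|) (Finset.mem_image.2 ⟨i, Finset.mem_range.2 (by omega : i < n + 1), rfl⟩)
  refine ⟨M0 + 1, ?_, ?_⟩
  · have := hM0le 0 (by omega); have := abs_nonneg (x (t 0)); linarith
  · intro u hu
    rcases eq_or_lt_of_le hu.2 with he | hl
    · rw [he, ← htn]; have := hM0le n (le_refl n); linarith
    · obtain ⟨i, hin, h1, h2⟩ := locate ht0 htm hu.1 (by rw [htn]; exact hl)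
      have := hto i hin u ⟨h1, h2⟩ (t i) ⟨le_refl _, htm i hin⟩
      have h3 := hM0le i (by omega)
      have := abs_sub_abs_le_abs_sub (x u) (x (t i))
      linarith [abs_abs (x u)]

/-- extension values. -/
lemma extFn_bound {T M : ℝ} {x : ℝ → ℝ} (hM0 : 0 ≤ M) (hT : 0 < T)
    (hb : ∀ t ∈ Set.Icc 0 T, |x t| ≤ M) : ∀ t, |extFn T x t| ≤ M := by
  intro t
  unfold extFn
  split_ifs with h1 h2
  · simpa using hM0
  · exact hb t ⟨by linarith, by linarith⟩
  · exact hb T ⟨hT.le, le_refl _⟩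

/-- the extension is right-continuous everywhere. -/
lemma extFn_right {T : ℝ} {x : ℝ → ℝ} (hx : Cadlag T x) (hT : 0 < T) (u : ℝ) :
    Filter.Tendsto (extFn T x) (nhdsWithin u (Set.Ioi u)) (nhds (extFn T x u)) := by
  rcases lt_trichotomy u 0 with hu | hu | hu
  · have he : extFn T x u = 0 := by unfold extFn; rw [if_pos hu]
    rw [he]
    apply Filter.Tendsto.congr' (f₁ := fun _ => (0:ℝ))
    · filter_upwards [Ioo_mem_nhdsGT_of_mem (Set.mem_Ico.2 ⟨le_refl u, hu⟩)] with s hs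
      unfold extFn; rw [if_pos hs.2]
    · exact tendsto_const_nhds
  · -- u = 0
    subst hu
    have he : extFn T x (0:ℝ) = x 0 := by
      unfold extFn; rw [if_neg (lt_irrefl 0), if_pos hT]
    rw [he]
    apply Filter.Tendsto.congr' (f₁ := x)
    · filter_upwards [Ioo_mem_nhdsGT_of_mem (Set.mem_Ico.2 ⟨le_refl (0:ℝ), hT⟩)]
        with s hs
      unfold extFn
      rw [if_neg (by linarith [hs.1]), if_pos hs.2]
    · exact hx.1 0 ⟨le_refl _, hT⟩
  · rcases lt_or_ge u T with huT | huT
    · have he : extFn T x u = x u := by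
        unfold extFn; rw [if_neg (by linarith), if_pos huT]
      rw [he]
      apply Filter.Tendsto.congr' (f₁ := x)
      · filter_upwards [Ioo_mem_nhdsGT_of_mem (Set.mem_Ico.2 ⟨le_refl u, huT⟩)] with s hs
        unfold extFn
        rw [if_neg (by linarith [hs.1]), if_pos hs.2]
      · exact hx.1 u ⟨hu.le, huT⟩
    · have he : extFn T x u = x T := by
        unfold extFn
        rw [if_neg (by linarith), if_neg (not_lt.2 huT)]
      rw [he]
      apply Filter.Tendsto.congr' (f₁ := fun _ => x T)
      · filter_upwards [self_mem_nhdsWithin] with s hs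
        have hs' : u < s := hs
        unfold extFn
        rw [if_neg (by linarith), if_neg (by push_neg; linarith)]
      · exact tendsto_const_nhds

/-- the extension has left limits everywhere. -/
lemma extFn_left {T : ℝ} {x : ℝ → ℝ} (hx : Cadlag T x) (hT : 0 < T) (u : ℝ) :
    ∃ L, Filter.Tendsto (extFn T x) (nhdsWithin u (Set.Iio u)) (nhds L) := by
  rcases le_or_gt u 0 with hu | hu
  · refine ⟨0, ?_⟩
    apply Filter.Tendsto.congr' (f₁ := fun _ => (0:ℝ))
    · filter_upwards [self_mem_nhdsWithin] with s hs
      have hs' : s < u := hs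
      unfold extFn; rw [if_pos (by linarith)]
    · exact tendsto_const_nhds
  · rcases le_or_gt u T with huT | huT
    · obtain ⟨L, hL⟩ := hx.2 u ⟨hu, huT⟩
      refine ⟨L, ?_⟩
      apply Filter.Tendsto.congr' (f₁ := x) _ hL
      filter_upwards [Ioo_mem_nhdsLT_of_mem (Set.mem_Ioc.2 ⟨hu, le_refl u⟩)] with s hs
      unfold extFn
      rw [if_neg (by linarith [hs.1]), if_pos (by linarith [hs.2, huT])]
    · refine ⟨x T, ?_⟩
      apply Filter.Tendsto.congr' (f₁ := fun _ => x T)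
      · filter_upwards [Ioo_mem_nhdsLT_of_mem (Set.mem_Ioc.2 ⟨huT, le_refl u⟩)] with s hs
        unfold extFn
        rw [if_neg (by linarith [hs.1]), if_neg (by push_neg; linarith [hs.1])]
      · exact tendsto_const_nhds

/-- time changes map right filters to right filters. -/
lemma tc_tendsto_right {a b : ℝ} {l : ℝ → ℝ} (h : TimeChange a b l) {u : ℝ}
    (hu : u ∈ Set.Ico a b) :
    Filter.Tendsto l (nhdsWithin u (Set.Ioo u b)) (nhdsWithin (l u) (Set.Ioi (l u))) := by
  rw [tendsto_nhdsWithin_iff]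
  constructor
  · have hcw : Filter.Tendsto l (nhdsWithin u (Set.Icc a b)) (nhds (l u)) :=
      (h.1 u (Set.mem_Icc.2 ⟨hu.1, hu.2.le⟩))
    exact hcw.mono_left (nhdsWithin_mono u (fun s hs => Set.mem_Icc.2 ⟨le_trans hu.1 hs.1.le, hs.2.le⟩))
  · filter_upwards [self_mem_nhdsWithin] with s hs
    exact h.2.1 (Set.mem_Icc.2 ⟨hu.1, hu.2.le⟩) (Set.mem_Icc.2 ⟨le_trans hu.1 hs.1.le, hs.2.le⟩) hs.1

/-- time changes map left filters to left filters. -/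
lemma tc_tendsto_left {a b : ℝ} {l : ℝ → ℝ} (h : TimeChange a b l) {u : ℝ}
    (hu : u ∈ Set.Ioc a b) :
    Filter.Tendsto l (nhdsWithin u (Set.Ioo a u)) (nhdsWithin (l u) (Set.Iio (l u))) := by
  rw [tendsto_nhdsWithin_iff]
  constructor
  · have hcw : Filter.Tendsto l (nhdsWithin u (Set.Icc a b)) (nhds (l u)) :=
      (h.1 u (Set.mem_Icc.2 ⟨hu.1.le, hu.2⟩))
    exact hcw.mono_left (nhdsWithin_mono u (fun s hs => Set.mem_Icc.2 ⟨hs.1.le, le_trans hs.2.le hu.2⟩))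
  · filter_upwards [self_mem_nhdsWithin] with s hs
    exact h.2.1 (Set.mem_Icc.2 ⟨hs.1.le, le_trans hs.2.le hu.2⟩) (Set.mem_Icc.2 ⟨hu.1.le, hu.2⟩) hs.2

/-- exchange of limits along a filter under uniform control. -/
lemma exch {F : Filter ℝ} [F.NeBot] {f : ℕ → ℝ → ℝ} {g : ℝ → ℝ} {c : ℕ → ℝ} {e : ℕ → ℝ}
    (he : Filter.Tendsto e Filter.atTop (nhds 0))
    (hk : ∀ k, Filter.Tendsto (f k) F (nhds (c k)))
    (hb : ∀ k, ∀ᶠ t in F, |g t - f k t| ≤ e k) :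
    ∃ L, Filter.Tendsto c Filter.atTop (nhds L) ∧ Filter.Tendsto g F (nhds L) := by
  have hcauchy : CauchySeq c := by
    rw [Metric.cauchySeq_iff]
    intro δ hδ
    have := (Metric.tendsto_atTop.1 he) (δ/2) (by linarith)
    obtain ⟨N, hN⟩ := this
    refine ⟨N, fun j hj k hkN => ?_⟩
    have hej : |e j| < δ/2 := by have := hN j hj; rwa [Real.dist_eq, sub_zero] at this
    have hek : |e k| < δ/2 := by have := hN k hkN; rwa [Real.dist_eq, sub_zero] at this
    have key : |c j - c k| ≤ e j + e k := by
      have htend : Filter.Tendsto (fun t => |f j t - f k t|) F (nhds (|c j - c k|)) :=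
        ((hk j).sub (hk k)).abs
      refine le_of_tendsto htend ?_
      filter_upwards [hb j, hb k] with t h1 h2
      calc |f j t - f k t| ≤ |f j t - g t| + |g t - f k t| := abs_sub_le _ _ _
      _ ≤ e j + e k := add_le_add (by rw [abs_sub_comm]; exact h1) h2
    rw [Real.dist_eq]
    calc |c j - c k| ≤ e j + e k := key
    _ ≤ |e j| + |e k| := add_le_add (le_abs_self _) (le_abs_self _)
    _ < δ := by linarith
  obtain ⟨L, hL⟩ := cauchySeq_tendsto_of_complete hcauchy
  refine ⟨L, hL, ?_⟩
  rw [Metric.tendsto_nhds]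
  intro δ hδ
  obtain ⟨N1, hN1⟩ := Metric.tendsto_atTop.1 he (δ/3) (by linarith)
  obtain ⟨N2, hN2⟩ := Metric.tendsto_atTop.1 hL (δ/3) (by linarith)
  set k := max N1 N2
  have h1 : |e k| < δ/3 := by
    have := hN1 k (le_max_left _ _); rwa [Real.dist_eq, sub_zero] at this
  have h2 : |c k - L| < δ/3 := by
    have := hN2 k (le_max_right _ _); rwa [Real.dist_eq] at this
  have h3 : ∀ᶠ t in F, |f k t - c k| < δ/3 :=
    Metric.tendsto_nhds.1 (hk k) (δ/3) (by linarith)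
  filter_upwards [h3, hb k] with t ht1 ht2
  rw [Real.dist_eq]
  calc |g t - L| ≤ |g t - c k| + |c k - L| := abs_sub_le _ _ _
  _ ≤ (|g t - f k t| + |f k t - c k|) + |c k - L| :=
      add_le_add_left (abs_sub_le _ _ _) _
  _ < δ := by
      have := le_abs_self (e k)
      linarith

end SkAux
namespace SkAux

lemma dmJ_eq (T ε : ℝ) (x y : ℝ → ℝ) :
    dmJ T ε x y = sInf (SkSet (-ε) (T + ε) (extFn T x) (extFn T y)) := rfl

lemma SkSet_nonempty {T ε : ℝ} (hT : 0 < T) (hε : 0 < ε) {x y : ℝ → ℝ}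
    (hx : Cadlag T x) (hy : Cadlag T y) :
    (SkSet (-ε) (T + ε) (extFn T x) (extFn T y)).Nonempty := by
  obtain ⟨Mx, hMx0, hMx⟩ := cadlag_bounded hx hT
  obtain ⟨My, hMy0, hMy⟩ := cadlag_bounded hy hT
  refine ⟨max 0 (Mx + My), (goodTC_id (-ε) (T+ε)).mem_SkSet (by positivity) ?_⟩
  intro t ht
  have h1 := extFn_bound hMx0 hT hMx t
  have h2 := extFn_bound hMy0 hT hMy t
  simp only [id]
  calc |extFn T x t - extFn T y t| ≤ |extFn T x t| + |extFn T y t| := abs_sub _ _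
  _ ≤ Mx + My := add_le_add h1 h2

lemma SkSet_symm_subset {a b : ℝ} (hab : a < b) (x y : ℝ → ℝ) :
    SkSet a b x y ⊆ SkSet a b y x := by
  rintro r ⟨hr0, l, htc, hlog, hsup⟩
  have hgood : GoodTC a b r l := ⟨hr0, htc, sand_of_log htc.2.1 hlog⟩
  obtain ⟨g, hg, hgl, hlg⟩ := hgood.inverse hab
  refine ⟨hr0, g, hg.2.1, hg.log_bound, ?_⟩
  intro t ht
  have h1 := hsup (g t) (hg.mapsTo ht)
  rw [hlg t ht] at h1
  rwa [abs_sub_comm]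

lemma dSk_symm {a b : ℝ} (hab : a < b) (x y : ℝ → ℝ) : dSk a b x y = dSk a b y x := by
  rw [dSk_eq, dSk_eq]
  congr 1
  exact le_antisymm (SkSet_symm_subset hab x y) (SkSet_symm_subset hab y x)

lemma mem_SkSet_triangle {a b r1 r2 : ℝ} {x y z : ℝ → ℝ}
    (h1 : r1 ∈ SkSet a b x y) (h2 : r2 ∈ SkSet a b y z) : r1 + r2 ∈ SkSet a b x z := by
  obtain ⟨hr1, l1, htc1, hlog1, hsup1⟩ := h1
  obtain ⟨hr2, l2, htc2, hlog2, hsup2⟩ := h2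
  have hg1 : GoodTC a b r1 l1 := ⟨hr1, htc1, sand_of_log htc1.2.1 hlog1⟩
  have hg2 : GoodTC a b r2 l2 := ⟨hr2, htc2, sand_of_log htc2.2.1 hlog2⟩
  have hgc := hg1.comp hg2
  refine ⟨by linarith, l2 ∘ l1, hgc.2.1, hgc.log_bound, ?_⟩
  intro t ht
  calc |x t - z ((l2 ∘ l1) t)| ≤ |x t - y (l1 t)| + |y (l1 t) - z (l2 (l1 t))| := abs_sub_le _ _ _
  _ ≤ r1 + r2 := add_le_add (hsup1 t ht) (hsup2 (l1 t) (htc1.2.2.2.2 ht))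

lemma dSk_triangle {a b : ℝ} {x y z : ℝ → ℝ}
    (h1 : (SkSet a b x y).Nonempty) (h2 : (SkSet a b y z).Nonempty) :
    dSk a b x z ≤ dSk a b x y + dSk a b y z := by
  rw [dSk_eq, dSk_eq, dSk_eq]
  have key : ∀ r1 ∈ SkSet a b x y, ∀ r2 ∈ SkSet a b y z,
      sInf (SkSet a b x z) ≤ r1 + r2 := fun r1 hr1 r2 hr2 =>
    csInf_le (SkSet_bddBelow a b x z) (mem_SkSet_triangle hr1 hr2)
  have step1 : sInf (SkSet a b x z) - sInf (SkSet a b y z) ≤ sInf (SkSet a b x y) := by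
    refine le_csInf h1 (fun r1 hr1 => ?_)
    have step2 : sInf (SkSet a b x z) - r1 ≤ sInf (SkSet a b y z) := by
      refine le_csInf h2 (fun r2 hr2 => ?_)
      linarith [key r1 hr1 r2 hr2]
    linarith
  linarith

lemma extFn_congr {T : ℝ} {x y : ℝ → ℝ} (h : ∀ t ∈ Set.Icc 0 T, x t = y t) (hT : 0 ≤ T) :
    extFn T x = extFn T y := by
  funext t
  unfold extFn
  split_ifs with h1 h2
  · rfl
  · exact h t ⟨not_lt.1 h1, h2.le⟩
  · exact h T ⟨hT, le_refl _⟩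

lemma dmJ_self {T ε : ℝ} (hε : 0 < ε) (x : ℝ → ℝ) : dmJ T ε x x = 0 := by
  rw [dmJ_eq]
  have : SkSet (-ε) (T + ε) (extFn T x) (extFn T x) = Set.Ici 0 := by
    apply le_antisymm
    · exact fun r hr => hr.1
    · intro r hr
      have := (goodTC_id (-ε) (T+ε)).mono hr
      refine ⟨hr, id, this.2.1, this.log_bound, ?_⟩
      intro t _
      simp only [id]
      rw [sub_self, abs_zero]
      exact hr
  rw [this, csInf_Ici]

/-- hard direction: vanishing distance implies equality on `[0,T]`. -/
lemma eq_of_dmJ_zero {T ε : ℝ} (hT : 0 < T) (hε : 0 < ε) {x y : ℝ → ℝ}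
    (hx : Cadlag T x) (hy : Cadlag T y) (h : dmJ T ε x y = 0) :
    ∀ t ∈ Set.Icc 0 T, x t = y t := by
  set a := -ε with ha
  set b := T + ε with hb
  have hab : a < b := by rw [ha, hb]; linarith
  have hba : 0 < b - a := by linarith
  have hne := SkSet_nonempty hT hε hx hy
  have key : ∀ c > 0, ∃ r ∈ SkSet a b (extFn T x) (extFn T y), r < c := by
    intro c hc
    apply exists_lt_of_csInf_lt hne
    rw [dmJ_eq] at h
    rw [h]; exact hc
  -- small r gives small displacement
  have disp : ∀ c > 0, ∃ r ∈ SkSet a b (extFn T x) (extFn T y), r < c ∧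
      ∀ l : ℝ → ℝ, TimeChange a b l →
      (∀ s ∈ Set.Icc a b, ∀ t ∈ Set.Icc a b, s < t →
        |Real.log ((l t - l s) / (t - s))| ≤ r) →
      ∀ t ∈ Set.Icc a b, |l t - t| < c := by
    intro c hc
    set c' := min c (Real.log (1 + c / (b - a))) with hc'
    have hlogpos : 0 < Real.log (1 + c / (b - a)) := by
      apply Real.log_pos
      have : 0 < c / (b - a) := by positivity
      linarith
    have hc'pos : 0 < c' := lt_min hc hlogpos
    obtain ⟨r, hrS, hrc⟩ := key c' hc'pos
    refine ⟨r, hrS, lt_of_lt_of_le hrc (min_le_left _ _), ?_⟩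
    intro l htc hlog t ht
    have hgood : GoodTC a b r l := ⟨hrS.1, htc, sand_of_log htc.2.1 hlog⟩
    have h1 := hgood.dist_le ht
    have h2 : Real.exp r < 1 + c / (b - a) := by
      have : r < Real.log (1 + c / (b - a)) := lt_of_lt_of_le hrc (min_le_right _ _)
      calc Real.exp r < Real.exp (Real.log (1 + c / (b-a))) := Real.exp_lt_exp.2 this
      _ = 1 + c / (b - a) := Real.exp_log (by positivity)
    calc |l t - t| ≤ (b - a) * (Real.exp r - 1) := h1
    _ < (b - a) * (c / (b - a)) := by nlinarith
    _ = c := by field_simp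
  intro t ht
  rcases eq_or_lt_of_le ht.2 with htT | htT
  · -- t = T
    rw [htT]
    have main : ∀ δ > (0:ℝ), |x T - y T| ≤ δ := by
      intro δ hδ
      obtain ⟨r, ⟨hr0, l, htc, hlog, hsup⟩, hrδ, hdisp⟩ := disp (min δ (ε/2)) (by
        apply lt_min hδ; linarith)
      set s := T + ε/2 with hs
      have hsI : s ∈ Set.Icc a b := by
        rw [ha, hb, hs]
        constructor <;> [linarith; linarith]
      have hls := hdisp l htc hlog s hsI
      have hlsT : T ≤ l s := by
        have h2 : |l s - s| < ε/2 := lt_of_lt_of_le hls (min_le_right _ _)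
        rw [abs_lt] at h2
        rw [hs] at h2 ⊢
        linarith [h2.1]
      have hXs : extFn T x s = x T := by
        unfold extFn
        rw [if_neg (by rw [hs]; push_neg; linarith), if_neg (by rw [hs]; push_neg; linarith)]
      have hYls : extFn T y (l s) = y T := by
        unfold extFn
        rw [if_neg (by push_neg; linarith), if_neg (by push_neg; linarith)]
      have hfin := hsup s hsI
      rw [hXs, hYls] at hfin
      exact le_trans hfin (le_trans hrδ.le (min_le_left _ _))
    by_contra hcon
    have habs : 0 < |x T - y T| := abs_pos.2 (sub_ne_zero.2 hcon)
    have := main (|x T - y T| / 2) (by linarith)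
    linarith
  · -- t < T
    have main : ∀ δ > (0:ℝ), |x t - y t| ≤ 3 * δ := by
      intro δ hδ
      obtain ⟨ηx, hηx, hXright⟩ := Metric.tendsto_nhdsWithin_nhds.1 (hx.1 t ⟨ht.1, htT⟩) δ hδ
      obtain ⟨ηy, hηy, hYright⟩ := Metric.tendsto_nhdsWithin_nhds.1 (hy.1 t ⟨ht.1, htT⟩) δ hδ
      set m := min (min ηx ηy) (T - t) with hm
      have hm0 : 0 < m := by
        apply lt_min (lt_min hηx hηy); linarith
      set s := t + m/2 with hs
      obtain ⟨r, ⟨hr0, l, htc, hlog, hsup⟩, hrδ, hdisp⟩ := disp (min δ (m/4)) (by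
        apply lt_min hδ; linarith)
      have hsI : s ∈ Set.Icc a b := by
        rw [ha, hb, hs]
        constructor
        · linarith [ht.1]
        · have : m ≤ T - t := min_le_right _ _
          linarith
      have hls := hdisp l htc hlog s hsI
      have hlsm : |l s - s| < m/4 := lt_of_lt_of_le hls (min_le_right _ _)
      rw [abs_lt] at hlsm
      have hmx : m ≤ ηx := le_trans (min_le_left _ _) (min_le_left _ _)
      have hmy : m ≤ ηy := le_trans (min_le_left _ _) (min_le_right _ _)
      have hmT : m ≤ T - t := min_le_right _ _
      have hlt1 : t < l s := by rw [hs] at hlsm ⊢; linarith [hlsm.1]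
      have hlt2 : l s < T := by rw [hs] at hlsm ⊢; linarith [hlsm.2]
      have hlty : |l s - t| < ηy := by
        rw [abs_lt]; rw [hs] at hlsm ⊢
        constructor <;> [linarith [hlsm.1]; linarith [hlsm.2]]
      have hXs : extFn T x s = x s := by
        unfold extFn
        rw [if_neg (by rw [hs]; push_neg; linarith [ht.1]), if_pos (by rw [hs]; linarith)]
      have hYls : extFn T y (l s) = y (l s) := by
        unfold extFn
        rw [if_neg (by push_neg; linarith [ht.1]), if_pos hlt2]
      have hxs : |x s - x t| < δ := by
        have := hXright (Set.mem_Ioi.2 (by rw [hs]; linarith : t < s))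
          (by rw [Real.dist_eq, hs]; rw [abs_lt]; constructor <;> linarith)
        rwa [Real.dist_eq] at this
      have hyls : |y (l s) - y t| < δ := by
        have := hYright (Set.mem_Ioi.2 hlt1) (by rw [Real.dist_eq]; exact hlty)
        rwa [Real.dist_eq] at this
      have hmid := hsup s hsI
      rw [hXs, hYls] at hmid
      calc |x t - y t| ≤ |x t - x s| + |x s - y t| := abs_sub_le _ _ _
      _ ≤ |x t - x s| + (|x s - y (l s)| + |y (l s) - y t|) :=
          add_le_add_right (abs_sub_le _ _ _) _
      _ ≤ δ + (r + δ) := by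
          refine add_le_add (by rw [abs_sub_comm]; exact hxs.le)
            (add_le_add hmid hyls.le)
      _ ≤ 3 * δ := by
          have : r ≤ δ := le_trans hrδ.le (min_le_left _ _)
          linarith
    by_contra hcon
    have habs : 0 < |x t - y t| := abs_pos.2 (sub_ne_zero.2 hcon)
    have := main (|x t - y t| / 4) (by linarith)
    linarith

end SkAux
namespace SkAux

/-- right-continuous step function with jump times `q` and values `r`. -/
noncomputable def stepFn (n : ℕ) (q r : Fin (n + 1) → ℝ) : ℝ → ℝ := fun t =>
  if h : ((Finset.univ : Finset (Fin (n + 1))).filter (fun i => q i ≤ t)).Nonempty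
  then r (((Finset.univ : Finset (Fin (n + 1))).filter (fun i => q i ≤ t)).max' h)
  else r 0

lemma stepFn_filter_congr {n : ℕ} (q r : Fin (n + 1) → ℝ) {s u : ℝ}
    (h : ((Finset.univ : Finset (Fin (n + 1))).filter (fun i => q i ≤ s)) =
      ((Finset.univ : Finset (Fin (n + 1))).filter (fun i => q i ≤ u))) :
    stepFn n q r s = stepFn n q r u := by
  unfold stepFn
  simp only [h]

lemma stepFn_const_right {n : ℕ} (q r : Fin (n + 1) → ℝ) (u : ℝ) :
    ∃ η > 0, ∀ s ∈ Set.Ico u (u + η), stepFn n q r s = stepFn n q r u := by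
  classical
  set G := (Finset.univ : Finset (Fin (n + 1))).filter (fun i => u < q i) with hG
  rcases G.eq_empty_or_nonempty with hGe | hGne
  · refine ⟨1, one_pos, fun s hs => ?_⟩
    apply stepFn_filter_congr
    ext i
    simp only [Finset.mem_filter, Finset.mem_univ, true_and]
    constructor
    · intro hi
      by_contra hcon
      push_neg at hcon
      have : i ∈ G := by simp [hG, Finset.mem_filter, hcon]
      rw [hGe] at this
      exact absurd this (Finset.notMem_empty i)
    · intro hi; exact le_trans hi hs.1
  · set η := G.inf' hGne q - u with hη
    have hη0 : 0 < η := by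
      rw [hη, sub_pos]
      obtain ⟨j, hj, hjeq⟩ := G.exists_mem_eq_inf' hGne q
      rw [hjeq]
      exact (Finset.mem_filter.1 hj).2
    refine ⟨η, hη0, fun s hs => ?_⟩
    apply stepFn_filter_congr
    ext i
    simp only [Finset.mem_filter, Finset.mem_univ, true_and]
    constructor
    · intro hi
      by_contra hcon
      push_neg at hcon
      have hiG : i ∈ G := by simp [hG, Finset.mem_filter, hcon]
      have : G.inf' hGne q ≤ q i := Finset.inf'_le _ hiG
      have : u + η ≤ q i := by rw [hη] at *; linarith
      linarith [hs.2]
    · intro hi; exact le_trans hi hs.1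

lemma stepFn_const_left {n : ℕ} (q r : Fin (n + 1) → ℝ) (u : ℝ) :
    ∃ η > 0, ∃ c, ∀ s ∈ Set.Ioo (u - η) u, stepFn n q r s = c := by
  classical
  set G := (Finset.univ : Finset (Fin (n + 1))).filter (fun i => q i < u) with hG
  have hkey : ∃ η > 0, ∀ s ∈ Set.Ioo (u - η) u,
      ((Finset.univ : Finset (Fin (n + 1))).filter (fun i => q i ≤ s)) = G := by
    rcases G.eq_empty_or_nonempty with hGe | hGne
    · refine ⟨1, one_pos, fun s hs => ?_⟩
      rw [hGe]
      ext i
      simp only [Finset.mem_filter, Finset.mem_univ, true_and, Finset.notMem_empty, iff_false]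
      intro hi
      have : i ∈ G := by
        simp only [hG, Finset.mem_filter, Finset.mem_univ, true_and]
        exact lt_of_le_of_lt hi hs.2
      rw [hGe] at this
      exact absurd this (Finset.notMem_empty i)
    · set η := u - G.sup' hGne q with hη
      have hη0 : 0 < η := by
        rw [hη, sub_pos]
        obtain ⟨j, hj, hjeq⟩ := G.exists_mem_eq_sup' hGne q
        rw [hjeq]
        exact (Finset.mem_filter.1 hj).2
      refine ⟨η, hη0, fun s hs => ?_⟩
      ext i
      simp only [Finset.mem_filter, Finset.mem_univ, true_and, hG]
      constructor
      · intro hi; exact lt_of_le_of_lt hi hs.2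
      · intro hi
        have : q i ≤ G.sup' hGne q := Finset.le_sup' _ (by
          simp only [hG, Finset.mem_filter, Finset.mem_univ, true_and]; exact hi)
        rw [hη] at hs
        linarith [hs.1]
  obtain ⟨η, hη0, hfe⟩ := hkey
  refine ⟨η, hη0, if h : G.Nonempty then r (G.max' h) else r 0, fun s hs => ?_⟩
  unfold stepFn
  rw [hfe s hs]

lemma stepFn_cadlag {T : ℝ} {n : ℕ} (q r : Fin (n + 1) → ℝ) : Cadlag T (stepFn n q r) := by
  constructor
  · intro u _
    obtain ⟨η, hη0, hc⟩ := stepFn_const_right q r u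
    apply Filter.Tendsto.congr' (f₁ := fun _ => stepFn n q r u)
    · filter_upwards [Ioo_mem_nhdsGT_of_mem
        (show u ∈ Set.Ico u (u + η) from ⟨le_refl u, by linarith⟩)] with s hs
      exact (hc s ⟨hs.1.le, hs.2⟩).symm
    · exact tendsto_const_nhds
  · intro u _
    obtain ⟨η, hη0, c, hc⟩ := stepFn_const_left q r u
    refine ⟨c, ?_⟩
    apply Filter.Tendsto.congr' (f₁ := fun _ => c)
    · filter_upwards [Ioo_mem_nhdsLT_of_mem
        (show u ∈ Set.Ioc (u - η) u from ⟨by linarith, le_refl u⟩)] with s hs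
      exact (hc s hs).symm
    · exact tendsto_const_nhds

lemma stepFn_eval {n : ℕ} (q r : Fin (n + 1) → ℝ) (i : Fin (n + 1)) (t : ℝ)
    (hq : q i ≤ t) (hmax : ∀ j, q j ≤ t → j ≤ i) : stepFn n q r t = r i := by
  classical
  have hmem : i ∈ (Finset.univ : Finset (Fin (n + 1))).filter (fun j => q j ≤ t) := by
    simp only [Finset.mem_filter, Finset.mem_univ, true_and]; exact hq
  have hne : ((Finset.univ : Finset (Fin (n + 1))).filter (fun j => q j ≤ t)).Nonempty :=
    ⟨i, hmem⟩
  unfold stepFn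
  rw [dif_pos hne]
  congr 1
  refine le_antisymm (Finset.max'_le _ _ _ (fun j hj => ?_)) (Finset.le_max' _ _ hmem)
  exact hmax j (Finset.mem_filter.1 hj).2

/-! ### elementary piecewise-linear time changes -/

noncomputable def tent (u p v : ℝ) : ℝ → ℝ := fun t =>
  max 0 (min ((t - u) / (p - u)) ((v - t) / (v - p)))

noncomputable def movePt (u p v q : ℝ) : ℝ → ℝ := fun t => t + (q - p) * tent u p v t

lemma tent_lip {u p v K : ℝ} (hup : u < p) (hpv : p < v) (hK1 : 1 / (p - u) ≤ K)
    (hK2 : 1 / (v - p) ≤ K) : ∀ s t : ℝ, |tent u p v t - tent u p v s| ≤ K * |t - s| := by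
  intro s t
  unfold tent
  have h1 : |max 0 (min ((t - u) / (p - u)) ((v - t) / (v - p))) -
      max 0 (min ((s - u) / (p - u)) ((v - s) / (v - p)))| ≤
      |min ((t - u) / (p - u)) ((v - t) / (v - p)) -
        min ((s - u) / (p - u)) ((v - s) / (v - p))| := by
    rw [max_comm 0 (min ((t - u) / (p - u)) _), max_comm 0 (min ((s - u) / (p - u)) _)]
    exact abs_max_sub_max_le_abs _ _ _
  have h2 : |min ((t - u) / (p - u)) ((v - t) / (v - p)) -
      min ((s - u) / (p - u)) ((v - s) / (v - p))| ≤
      max (|(t - u) / (p - u) - (s - u) / (p - u)|) (|(v - t) / (v - p) - (v - s) / (v - p)|) :=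
    abs_min_sub_min_le_max _ _ _ _
  have hpu : 0 < p - u := by linarith
  have hvp : 0 < v - p := by linarith
  have e1 : |(t - u) / (p - u) - (s - u) / (p - u)| = |t - s| / (p - u) := by
    rw [div_sub_div_same, abs_div, abs_of_pos hpu]
    congr 1; ring_nf
  have e2 : |(v - t) / (v - p) - (v - s) / (v - p)| = |t - s| / (v - p) := by
    rw [div_sub_div_same, abs_div, abs_of_pos hvp]
    congr 1
    rw [show v - t - (v - s) = -(t - s) by ring, abs_neg]
  have h3 : |t - s| / (p - u) ≤ K * |t - s| := by
    rw [div_eq_mul_one_div, mul_comm]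
    exact mul_le_mul_of_nonneg_right hK1 (abs_nonneg _)
  have h4 : |t - s| / (v - p) ≤ K * |t - s| := by
    rw [div_eq_mul_one_div, mul_comm]
    exact mul_le_mul_of_nonneg_right hK2 (abs_nonneg _)
  calc _ ≤ _ := h1
  _ ≤ _ := h2
  _ = max (|t - s| / (p - u)) (|t - s| / (v - p)) := by rw [e1, e2]
  _ ≤ K * |t - s| := max_le h3 h4

lemma tent_zero_left {u p v t : ℝ} (hup : u < p) (ht : t ≤ u) : tent u p v t = 0 := by
  unfold tent
  apply max_eq_left
  apply le_trans (min_le_left _ _)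
  apply div_nonpos_of_nonpos_of_nonneg <;> linarith

lemma tent_zero_right {u p v t : ℝ} (hpv : p < v) (ht : v ≤ t) : tent u p v t = 0 := by
  unfold tent
  apply max_eq_left
  apply le_trans (min_le_right _ _)
  apply div_nonpos_of_nonpos_of_nonneg <;> linarith

lemma tent_knot {u p v : ℝ} (hup : u < p) (hpv : p < v) : tent u p v p = 1 := by
  unfold tent
  rw [div_self (by linarith : p - u ≠ 0), div_self (by linarith : v - p ≠ 0)]
  simp

lemma movePt_sandwich {u p v q K : ℝ} (hup : u < p) (hpv : p < v)
    (hK : K = max (1 / (p - u)) (1 / (v - p))) :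
    ∀ s t : ℝ, s < t → (1 - |q - p| * K) * (t - s) ≤ movePt u p v q t - movePt u p v q s ∧
      movePt u p v q t - movePt u p v q s ≤ (1 + |q - p| * K) * (t - s) := by
  intro s t hst
  have hlip := tent_lip hup hpv (le_max_left (1/(p-u)) (1/(v-p))) (le_max_right _ _)
  have hb : |(q - p) * (tent u p v t - tent u p v s)| ≤ |q - p| * K * (t - s) := by
    rw [abs_mul]
    calc |q - p| * |tent u p v t - tent u p v s| ≤ |q - p| * (K * |t - s|) :=
        mul_le_mul_of_nonneg_left (by rw [← hK] at hlip; exact hlip s t) (abs_nonneg _)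
    _ = |q - p| * K * |t - s| := by ring
    _ = |q - p| * K * (t - s) := by rw [abs_of_pos (by linarith : (0:ℝ) < t - s)]
  rw [abs_le] at hb
  have he : movePt u p v q t - movePt u p v q s =
      (t - s) + (q - p) * (tent u p v t - tent u p v s) := by
    unfold movePt; ring
  constructor <;> rw [he] <;> nlinarith [hb.1, hb.2]

lemma movePt_good {a b u p v q K : ℝ} (hau : a ≤ u) (hup : u < p) (hpv : p < v)
    (hvb : v ≤ b) (hK : K = max (1 / (p - u)) (1 / (v - p)))
    (hc : |q - p| * K ≤ 1 / 2) :
    GoodTC a b (2 * (|q - p| * K)) (movePt u p v q) ∧ StrictMono (movePt u p v q) ∧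
      (∀ t, t ≤ u → movePt u p v q t = t) ∧ (∀ t, v ≤ t → movePt u p v q t = t) ∧
      movePt u p v q p = q := by
  set c := |q - p| * K with hcdef
  have hc0 : 0 ≤ c := by
    rw [hcdef, hK]
    apply mul_nonneg (abs_nonneg _)
    exact le_trans (div_nonneg zero_le_one (by linarith : (0:ℝ) ≤ p - u)) (le_max_left _ _)
  have hsand := movePt_sandwich (q := q) hup hpv hK
  have hmono : StrictMono (movePt u p v q) := by
    intro s t hst
    have := (hsand s t hst).1
    nlinarith
  have hfixl : ∀ t, t ≤ u → movePt u p v q t = t := by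
    intro t ht
    unfold movePt
    rw [tent_zero_left hup ht]; ring
  have hfixr : ∀ t, v ≤ t → movePt u p v q t = t := by
    intro t ht
    unfold movePt
    rw [tent_zero_right hpv ht]; ring
  have hknot : movePt u p v q p = q := by
    unfold movePt
    rw [tent_knot hup hpv]; ring
  have hA : movePt u p v q a = a := hfixl a hau
  have hB : movePt u p v q b = b := hfixr b hvb
  have hcont : Continuous (movePt u p v q) := by
    have htent : Continuous (tent u p v) := by
      apply Continuous.max continuous_const
      exact ((continuous_id.sub continuous_const).div_const _).min
        ((continuous_const.sub continuous_id).div_const _)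
    exact continuous_id.add (continuous_const.mul htent)
  have hMaps : Set.MapsTo (movePt u p v q) (Set.Icc a b) (Set.Icc a b) := by
    intro t ht
    constructor
    · rw [← hA]; exact hmono.monotone ht.1
    · rw [← hB]; exact hmono.monotone ht.2
  refine ⟨⟨by linarith, ⟨hcont.continuousOn, hmono.strictMonoOn _, hA, hB, hMaps⟩, ?_⟩,
    hmono, hfixl, hfixr, hknot⟩
  intro s hs t ht hst
  obtain ⟨g1, g2⟩ := hsand s t hst
  have hts : (0:ℝ) < t - s := by linarith
  have hexp1 : 1 + c ≤ Real.exp (2 * c) := by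
    have := Real.add_one_le_exp (2 * c)
    linarith
  have hexp2 : Real.exp (-(2 * c)) ≤ 1 - c := by
    have h1 : Real.exp (-(2*c)) * Real.exp (2*c) = 1 := by rw [← Real.exp_add]; simp
    have h2 : 1 + 2*c ≤ Real.exp (2*c) := by linarith [Real.add_one_le_exp (2*c)]
    have h3 : 0 < Real.exp (2*c) := Real.exp_pos _
    -- exp(-2c) ≤ 1/(1+2c) ≤ 1-c
    have h4 : Real.exp (-(2*c)) * (1 + 2*c) ≤ 1 := by
      calc Real.exp (-(2*c)) * (1 + 2*c) ≤ Real.exp (-(2*c)) * Real.exp (2*c) :=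
          mul_le_mul_of_nonneg_left h2 (Real.exp_pos _).le
      _ = 1 := h1
    nlinarith [Real.exp_pos (-(2*c))]
  constructor
  · calc Real.exp (-(2*c)) * (t - s) ≤ (1 - c) * (t - s) :=
        mul_le_mul_of_nonneg_right hexp2 hts.le
    _ ≤ _ := g1
  · calc movePt u p v q t - movePt u p v q s ≤ (1 + c) * (t - s) := g2
    _ ≤ Real.exp (2*c) * (t - s) := mul_le_mul_of_nonneg_right hexp1 hts.le

end SkAux
namespace SkAux

/-- the countable family of rational step functions. -/
def ratSteps : Set (ℝ → ℝ) :=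
  ⋃ (n : ℕ), Set.range (fun p : (Fin (n + 1) → ℚ) × (Fin (n + 1) → ℚ) =>
    stepFn n (fun i => (p.1 i : ℝ)) (fun i => (p.2 i : ℝ)))

lemma ratSteps_countable : ratSteps.Countable :=
  Set.countable_iUnion (fun _ => Set.countable_range _)

lemma ratSteps_cadlag {T : ℝ} : ∀ y ∈ ratSteps, Cadlag T y := by
  rintro y hy
  obtain ⟨n, p, rfl⟩ := by
    simpa only [ratSteps, Set.mem_iUnion, Set.mem_range] using hy
  exact stepFn_cadlag _ _

lemma separability {T ε : ℝ} (hT : 0 < T) (hε : 0 < ε) :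
    ∀ x : ℝ → ℝ, Cadlag T x → ∀ δ > (0:ℝ), ∃ y ∈ ratSteps, dmJ T ε x y < δ := by
  intro x hx δ hδ
  set a := -ε with hadef
  set b := T + ε with hbdef
  have hab : a < b := by rw [hadef, hbdef]; linarith
  set o := δ / 8 with ho
  obtain ⟨n, t, ht0, htn, htm, hto⟩ := cadlag_partition hx hT (show (0:ℝ) < o by
    rw [ho]; linarith)
  have hn1 : 1 ≤ n := by
    by_contra hcon
    have : n = 0 := by omega
    rw [this] at htn
    rw [ht0] at htn; linarith
  have htmono := partition_mono htm
  -- minimal gap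
  set gap := (Finset.range n).inf' (by simp [Finset.nonempty_range_iff]; omega)
    (fun i => t (i + 1) - t i) with hgap
  have hgap0 : 0 < gap := by
    rw [hgap, Finset.lt_inf'_iff]
    intro i hi
    exact sub_pos.2 (htm i (Finset.mem_range.1 hi))
  have hgaple : ∀ i < n, gap ≤ t (i + 1) - t i := by
    intro i hi
    exact Finset.inf'_le _ (Finset.mem_range.2 hi)
  set g' := min gap ε with hg'
  have hg'0 : 0 < g' := lt_min hgap0 hε
  set γ := min (g' / 2) (δ * g' / (4 * n)) with hγ
  have hγ0 : 0 < γ := by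
    apply lt_min (by linarith)
    have : (0:ℝ) < n := by exact_mod_cast hn1
    positivity
  have hγg : γ ≤ g' / 2 := min_le_left _ _
  have hγδ : γ ≤ δ * g' / (4 * n) := min_le_right _ _
  set ρ := 2 * γ / g' with hρ
  have hρ0 : 0 < ρ := by rw [hρ]; positivity
  have hnρ : (n : ℝ) * ρ ≤ δ / 2 := by
    rw [hρ]
    have hn0 : (0:ℝ) < n := by exact_mod_cast hn1
    rw [mul_div_assoc']
    rw [div_le_iff₀ hg'0]
    calc (n:ℝ) * (2 * γ) ≤ (n:ℝ) * (2 * (δ * g' / (4 * n))) := by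
          apply mul_le_mul_of_nonneg_left _ hn0.le
          linarith
    _ = δ / 2 * g' := by field_simp; ring
  -- choose rational jump times and values
  have hqex : ∀ i : ℕ, ∃ qq : ℚ, t i - γ < (qq:ℝ) ∧ (qq:ℝ) < t i := by
    intro i
    obtain ⟨qq, h1, h2⟩ := exists_rat_btwn (show t i - γ < t i by linarith)
    exact ⟨qq, h1, h2⟩
  choose qsel hqsel1 hqsel2 using hqex
  have hrex : ∀ i : ℕ, ∃ rr : ℚ, x (t i) < (rr:ℝ) ∧ (rr:ℝ) < x (t i) + o := by
    intro i
    obtain ⟨rr, h1, h2⟩ := exists_rat_btwn (show x (t i) < x (t i) + o by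
      rw [ho]; linarith)
    exact ⟨rr, h1, h2⟩
  choose rsel hrsel1 hrsel2 using hrex
  set q : ℕ → ℝ := fun i => if i = 0 then 0 else (qsel i : ℝ) with hqdef
  have hq0 : q 0 = 0 := by rw [hqdef]; simp
  have hqi : ∀ i, 1 ≤ i → t i - γ < q i ∧ q i < t i := by
    intro i hi
    rw [hqdef]
    simp only [if_neg (by omega : ¬ i = 0)]
    exact ⟨hqsel1 i, hqsel2 i⟩
  have hqle : ∀ i, q i ≤ t i := by
    intro i
    rcases Nat.eq_zero_or_pos i with h | h
    · rw [h, hq0, ht0]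
    · exact (hqi i h).2.le
  have ht1γ : ∀ i, 1 ≤ i → i ≤ n → 2 * γ ≤ t i := by
    intro i h1 hn'
    have : t 1 ≤ t i := htmono 1 i h1 hn'
    have h2 : gap ≤ t 1 - t 0 := hgaple 0 (by omega)
    rw [ht0] at h2
    have : g' ≤ gap := min_le_left _ _
    linarith
  have hq0le : ∀ i ≤ n, 0 ≤ q i := by
    intro i hi
    rcases Nat.eq_zero_or_pos i with h | h
    · rw [h, hq0]
    · have := (hqi i h).1
      have := ht1γ i h hi
      linarith
  have hqmono : ∀ i j, i < j → j ≤ n → q i < q j := by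
    intro i j hij hjn
    have hj1 : 1 ≤ j := by omega
    have h1 : t j - γ < q j := (hqi j hj1).1
    have h2 : gap ≤ t j - t (j - 1) := by
      have := hgaple (j-1) (by omega)
      have he : j - 1 + 1 = j := by omega
      rwa [he] at this
    have h3 : t i ≤ t (j - 1) := htmono i (j-1) (by omega) (by omega)
    have h4 : g' ≤ gap := min_le_left _ _
    calc q i ≤ t i := hqle i
    _ ≤ t (j-1) := h3
    _ < t j - γ := by linarith
    _ < q j := h1
  -- extended partition point function
  set t' : ℕ → ℝ := fun i => if i ≤ n then t i else b with ht'def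
  have ht'mono : ∀ i j, i < j → j ≤ n + 1 → t' i < t' j := by
    intro i j hij hjn
    rw [ht'def]
    simp only
    rcases Nat.lt_or_ge n j with h | h
    · have hj : ¬ j ≤ n := by omega
      rw [if_neg hj, if_pos (by omega : i ≤ n)]
      calc t i ≤ t n := htmono i n (by omega) (le_refl n)
      _ = T := htn
      _ < b := by rw [hbdef]; linarith
    · rw [if_pos (by omega : i ≤ n), if_pos (by omega : j ≤ n)]
      calc t i ≤ t (j-1) := htmono i (j-1) (by omega) (by omega)
      _ < t j := by
          have := htm (j-1) (by omega)
          have he : j - 1 + 1 = j := by omega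
          rwa [he] at this
  have ht'gap : ∀ i < n, g' ≤ t' (i + 1) - t i := by
    intro i hi
    rw [ht'def]
    simp only
    rcases Nat.lt_or_ge (i+1) (n+1) with h | h
    · rw [if_pos (by omega : i + 1 ≤ n)]
      exact le_trans (min_le_left _ _) (hgaple i hi)
    · omega
  have ht'gapn : g' ≤ t' (n + 1) - t n := by
    rw [ht'def]
    simp only [if_neg (by omega : ¬ n + 1 ≤ n)]
    rw [htn, hbdef]
    calc g' ≤ ε := min_le_right _ _
    _ = T + ε - T := by ring
  -- the composed time change
  set L : ℕ → ℝ → ℝ := fun m => Nat.rec id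
    (fun i Li => movePt (q i) (t (i + 1)) (t' (i + 2)) (q (i + 1)) ∘ Li) m with hLdef
  have hL0 : L 0 = id := rfl
  have hLsucc : ∀ m, L (m + 1) = movePt (q m) (t (m + 1)) (t' (m + 2)) (q (m + 1)) ∘ L m :=
    fun m => rfl
  -- per-map goodness
  have hmap : ∀ m < n, GoodTC a b ρ (movePt (q m) (t (m + 1)) (t' (m + 2)) (q (m + 1))) ∧
      StrictMono (movePt (q m) (t (m + 1)) (t' (m + 2)) (q (m + 1))) ∧
      (∀ w, w ≤ q m → movePt (q m) (t (m + 1)) (t' (m + 2)) (q (m + 1)) w = w) ∧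
      (∀ w, t' (m + 2) ≤ w → movePt (q m) (t (m + 1)) (t' (m + 2)) (q (m + 1)) w = w) ∧
      movePt (q m) (t (m + 1)) (t' (m + 2)) (q (m + 1)) (t (m + 1)) = q (m + 1) := by
    intro m hm
    set u := q m
    set p := t (m + 1)
    set v := t' (m + 2)
    set qq := q (m + 1)
    set K := max (1 / (p - u)) (1 / (v - p)) with hK
    have hau : a ≤ u := by
      rw [hadef]
      have := hq0le m (by omega)
      linarith
    have hup : u < p := by
      calc u ≤ t m := hqle m
      _ < t (m + 1) := htm m hm
    have hupg : g' ≤ p - u := by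
      have hg : g' ≤ gap := min_le_left _ _
      rcases Nat.eq_zero_or_pos m with h | h
      · show g' ≤ t (m + 1) - q m
        rw [h, hq0, sub_zero]
        have h2 := hgaple 0 (by omega)
        rw [ht0, sub_zero] at h2
        linarith
      · have h1 : u < t m := (hqi m h).2
        have h2 : gap ≤ t (m+1) - t m := hgaple m hm
        show g' ≤ t (m + 1) - q m
        have hum : (u : ℝ) = q m := rfl
        rw [← hum]
        linarith
    have hpv : p < v := by
      have := ht'mono (m+1) (m+2) (by omega) (by omega)
      have he : t' (m+1) = t (m+1) := by
        rw [ht'def]; simp only [if_pos (by omega : m + 1 ≤ n)]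
      rwa [he] at this
    have hpvg : g' ≤ v - p := by
      show g' ≤ t' (m + 2) - t (m + 1)
      rcases Nat.lt_or_ge (m+1) n with h | h
      · exact ht'gap (m+1) h
      · rw [show m + 2 = n + 1 from by omega, show m + 1 = n from by omega]
        exact ht'gapn
    have hvb : v ≤ b := by
      show t' (m + 2) ≤ b
      rw [ht'def]
      simp only
      split_ifs with h
      · calc t (m+2) ≤ t n := htmono (m+2) n h (le_refl n)
        _ = T := htn
        _ ≤ b := by rw [hbdef]; linarith
      · exact le_refl b
    have hKb : K ≤ 1 / g' := by
      rw [hK]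
      apply max_le
      · apply one_div_le_one_div_of_le hg'0 hupg
      · apply one_div_le_one_div_of_le hg'0 hpvg
    have hK0 : 0 ≤ K :=
      le_trans (div_nonneg zero_le_one (by linarith : (0:ℝ) ≤ p - u))
        (le_max_left (1/(p-u)) (1/(v-p)))
    have hqqp : |qq - p| ≤ γ := by
      have h1 := (hqi (m+1) (by omega)).1
      have h2 := (hqi (m+1) (by omega)).2
      have hqqe : (qq : ℝ) = q (m + 1) := rfl
      have hpe : (p : ℝ) = t (m + 1) := rfl
      rw [abs_le, hqqe, hpe]
      constructor <;> linarith
    have hcK : |qq - p| * K ≤ γ / g' := by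
      calc |qq - p| * K ≤ γ * (1 / g') :=
        mul_le_mul hqqp hKb hK0 hγ0.le
      _ = γ / g' := by ring
    have hc2 : |qq - p| * K ≤ 1 / 2 := by
      calc |qq - p| * K ≤ γ / g' := hcK
      _ ≤ 1 / 2 := by
          rw [div_le_div_iff₀ hg'0 (by norm_num : (0:ℝ) < 2)]
          linarith
    obtain ⟨hgood, hmono, hfixl, hfixr, hknot⟩ := movePt_good hau hup hpv hvb hK hc2
    refine ⟨hgood.mono ?_, hmono, hfixl, hfixr, hknot⟩
    calc 2 * (|qq - p| * K) ≤ 2 * (γ / g') := by linarith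
    _ = ρ := by rw [hρ]; ring
  -- induction on the composition
  have hind : ∀ m, m ≤ n → GoodTC a b (m * ρ) (L m) ∧ StrictMono (L m) ∧
      (∀ w, w ≤ 0 → L m w = w) ∧
      (∀ i, m < i → i ≤ n + 1 → L m (t' i) = t' i) ∧
      (∀ i, 1 ≤ i → i ≤ m → L m (t i) = q i) := by
    intro m
    induction m with
    | zero =>
      intro _
      refine ⟨by rw [hL0]; simpa using goodTC_id a b, by rw [hL0]; exact strictMono_id,
        ?_, ?_, ?_⟩
      · intro w _; rfl
      · intro i _ _; rfl
      · intro i h1 h2; omega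
    | succ m ih =>
      intro hm
      obtain ⟨ihg, ihm, ihz, ihfix, ihval⟩ := ih (by omega)
      obtain ⟨mg, mm, mfixl, mfixr, mknot⟩ := hmap m (by omega)
      rw [hLsucc m]
      refine ⟨?_, mm.comp ihm, ?_, ?_, ?_⟩
      · have hcomp := ihg.comp mg
        apply hcomp.mono
        apply le_of_eq
        push_cast
        ring
      · intro w hw
        have h1 := ihz w hw
        simp only [Function.comp_apply, h1]
        apply mfixl
        have := hq0le m (by omega)
        linarith
      · intro i hi hin
        simp only [Function.comp_apply, ihfix i (by omega) hin]
        apply mfixr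
        rcases Nat.eq_or_lt_of_le (show m + 2 ≤ i by omega) with he | hl
        · rw [← he]
        · exact (ht'mono (m+2) i hl hin).le
      · intro i h1 hi
        rcases Nat.lt_or_ge i (m+1) with h | h
        · simp only [Function.comp_apply, ihval i h1 (by omega)]
          apply mfixl
          rcases Nat.eq_or_lt_of_le (show i ≤ m by omega) with he | hl
          · rw [he]
          · exact (hqmono i m hl (by omega)).le
        · have he : i = m + 1 := by omega
          subst he
          have hfixm : L m (t (m+1)) = t (m+1) := by
            have hh := ihfix (m+1) (by omega) (by omega)
            have ht'e : t' (m+1) = t (m+1) := by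
              rw [ht'def]; simp only [if_pos (by omega : m + 1 ≤ n)]
            rwa [ht'e] at hh
          simp only [Function.comp_apply, hfixm, mknot]
  obtain ⟨hLg, hLm, hLz, hLfix, hLval⟩ := hind n (le_refl n)
  have hLgood : GoodTC a b (δ/2) (L n) := hLg.mono hnρ
  -- the rational step function
  set Q : Fin (n+1) → ℚ := fun i => if (i : ℕ) = 0 then 0 else qsel i with hQ
  set R : Fin (n+1) → ℚ := fun i => rsel i with hR
  set qF : Fin (n+1) → ℝ := fun i => ((Q i : ℚ) : ℝ) with hqF
  set rF : Fin (n+1) → ℝ := fun i => ((R i : ℚ) : ℝ) with hrF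
  have hqF_eq : ∀ i : Fin (n+1), qF i = q (i : ℕ) := by
    intro i
    rw [hqF, hQ, hqdef]
    simp only
    split_ifs with h
    · simp
    · rfl
  have hrF_eq : ∀ i : Fin (n+1), rF i = (rsel (i : ℕ) : ℝ) := fun i => rfl
  set y := stepFn n qF rF with hydef
  have hymem : y ∈ ratSteps := by
    rw [ratSteps, Set.mem_iUnion]
    exact ⟨n, ⟨(Q, R), rfl⟩⟩
  have hqmono' : ∀ i j, i ≤ j → j ≤ n → q i ≤ q j := by
    intro i j hij hjn
    rcases Nat.eq_or_lt_of_le hij with he | hl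
    · rw [he]
    · exact (hqmono i j hl hjn).le
  have hqnT : q n < T := by
    rw [← htn]; exact (hqi n hn1).2
  have hyval_hi : ∀ w, q n ≤ w → extFn T y w = (rsel n : ℝ) := by
    intro w hw
    have heval : ∀ z, q n ≤ z → y z = (rsel n : ℝ) := by
      intro z hz
      rw [hydef]
      have hev := stepFn_eval qF rF (Fin.last n) z (by
        rw [hqF_eq]; simpa using hz) (fun j _ => Fin.le_last j)
      rw [hev, hrF_eq]
      simp
    have hw0 : 0 ≤ w := le_trans (hq0le n (le_refl n)) hw
    unfold extFn
    split_ifs with h1 h2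
    · linarith
    · exact heval w hw
    · exact heval T hqnT.le
  have hyval_mid : ∀ i, i < n → ∀ w, q i ≤ w → w < q (i+1) → extFn T y w = (rsel i : ℝ) := by
    intro i hi w h1 h2
    have hw0 : 0 ≤ w := le_trans (hq0le i (by omega)) h1
    have hwT : w < T := by
      have ha1 : q (i+1) ≤ q n := hqmono' (i+1) n (by omega) (le_refl n)
      linarith
    unfold extFn
    rw [if_neg (not_lt.2 hw0), if_pos hwT, hydef]
    have hev := stepFn_eval qF rF ⟨i, by omega⟩ w (by rw [hqF_eq]; exact h1) ?_
    · rw [hev, hrF_eq]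
    · intro j hj
      by_contra hcon
      rw [not_le] at hcon
      have hji : i + 1 ≤ (j : ℕ) := by
        have := hcon
        rw [Fin.lt_def] at this
        simpa using this
      have hq1 : q (i+1) ≤ q (j : ℕ) := hqmono' (i+1) (j : ℕ) hji (by omega)
      rw [hqF_eq] at hj
      linarith
  have habs_r : ∀ i, |x (t i) - (rsel i : ℝ)| ≤ o := by
    intro i
    have h1 := hrsel1 i
    have h2 := hrsel2 i
    rw [abs_sub_comm, abs_of_pos (by linarith)]
    linarith
  have hsup : ∀ w ∈ Set.Icc a b, |extFn T x w - extFn T y (L n w)| ≤ 2 * o := by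
    intro w hw
    have ho0 : 0 < o := by rw [ho]; linarith
    rcases lt_or_ge w 0 with hneg | hpos
    · rw [hLz w hneg.le]
      have e1 : extFn T x w = 0 := by unfold extFn; rw [if_pos hneg]
      have e2 : extFn T y w = 0 := by unfold extFn; rw [if_pos hneg]
      rw [e1, e2]
      simp only [sub_zero, abs_zero]
      linarith
    · rcases lt_or_ge w T with hwT | hwT
      · obtain ⟨i, hin, hi1, hi2⟩ := locate ht0 htm hpos (by rw [htn]; exact hwT)
        have hLti : L n (t i) = q i := by
          rcases Nat.eq_zero_or_pos i with h0 | h0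
          · rw [h0, ht0, hq0]
            exact hLz 0 (le_refl 0)
          · exact hLval i h0 (by omega)
        have hLti1 : L n (t (i+1)) = q (i+1) := hLval (i+1) (by omega) (by omega)
        have h1 : q i ≤ L n w := by rw [← hLti]; exact hLm.monotone hi1
        have h2 : L n w < q (i+1) := by rw [← hLti1]; exact hLm hi2
        rw [hyval_mid i hin _ h1 h2]
        have e1 : extFn T x w = x w := by
          unfold extFn; rw [if_neg (not_lt.2 hpos), if_pos hwT]
        rw [e1]
        have hosc := hto i hin w ⟨hi1, hi2⟩ (t i) ⟨le_refl _, htm i hin⟩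
        calc |x w - (rsel i : ℝ)| ≤ |x w - x (t i)| + |x (t i) - (rsel i : ℝ)| :=
            abs_sub_le _ _ _
        _ ≤ o + o := add_le_add hosc (habs_r i)
        _ = 2 * o := by ring
      · have e1 : extFn T x w = x T := by
          unfold extFn
          rw [if_neg (by push_neg; linarith), if_neg (not_lt.2 hwT)]
        have hLT : L n (t n) = q n := hLval n hn1 (le_refl n)
        have h1 : q n ≤ L n w := by
          rw [← hLT]
          apply hLm.monotone
          rw [htn]
          exact hwT
        rw [e1, hyval_hi _ h1]
        have := habs_r n
        rw [htn] at this
        linarith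
  refine ⟨y, hymem, ?_⟩
  have hle := dSk_le_of_good hLgood (by linarith : (0:ℝ) ≤ 2 * o) hsup
  have hdm : dmJ T ε x y = dSk a b (extFn T x) (extFn T y) := by
    rw [hadef, hbdef]; rfl
  rw [hdm]
  apply lt_of_le_of_lt hle
  apply max_lt (by linarith)
  rw [ho]; linarith

end SkAux
namespace SkAux

lemma geom_half_eq : ∀ j : ℕ, ∑ i ∈ Finset.range j, ((1:ℝ)/2)^i = 2 - 2 * (1/2)^j := by
  intro j
  induction j with
  | zero => simp
  | succ m ih =>
    rw [Finset.sum_range_succ, ih, pow_succ]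
    ring

lemma geom_half_le (j : ℕ) : ∑ i ∈ Finset.range j, ((1:ℝ)/2)^i ≤ 2 := by
  rw [geom_half_eq]
  have : (0:ℝ) < (1/2)^j := by positivity
  linarith

lemma exp_sub_one_le {r : ℝ} (h0 : 0 ≤ r) (h1 : r ≤ 1) : Real.exp r - 1 ≤ 3 * r := by
  have key : Real.exp r - 1 ≤ r * Real.exp r := by
    have h2 := Real.add_one_le_exp (-r)
    have h3 : Real.exp (-r) * Real.exp r = 1 := by rw [← Real.exp_add]; simp
    nlinarith [Real.exp_pos r]
  have h4 : Real.exp r ≤ Real.exp 1 := Real.exp_le_exp.2 h1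
  have h5 : Real.exp 1 < 2.7182818286 := Real.exp_one_lt_d9
  nlinarith [Real.exp_pos r]

lemma sand_continuousOn {a b r : ℝ} {l : ℝ → ℝ} (hsand : Sand a b r l) :
    ContinuousOn l (Set.Icc a b) := by
  have hlip : LipschitzOnWith (Real.exp r).toNNReal l (Set.Icc a b) := by
    rw [lipschitzOnWith_iff_dist_le_mul]
    intro y1 h1 y2 h2
    rw [Real.coe_toNNReal _ (Real.exp_pos r).le, Real.dist_eq, Real.dist_eq]
    rcases lt_trichotomy y1 y2 with hlt | heq | hgt
    · obtain ⟨k1, k2⟩ := hsand y1 h1 y2 h2 hlt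
      rw [abs_of_nonpos (by nlinarith [Real.exp_pos (-r)]), abs_of_neg (by linarith)]
      nlinarith
    · simp [heq]
    · obtain ⟨k1, k2⟩ := hsand y2 h2 y1 h1 hgt
      rw [abs_of_nonneg (by nlinarith [Real.exp_pos (-r)]), abs_of_pos (by linarith)]
      nlinarith
  exact hlip.continuousOn

lemma tendsto_of_dist_le {c : ℕ → ℝ} {L : ℝ} {e : ℕ → ℝ}
    (he : Filter.Tendsto e Filter.atTop (nhds 0)) (h : ∀ k, |c k - L| ≤ e k) :
    Filter.Tendsto c Filter.atTop (nhds L) := by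
  rw [Metric.tendsto_atTop]
  intro δ hδ
  obtain ⟨N, hN⟩ := Metric.tendsto_atTop.1 he δ hδ
  refine ⟨N, fun k hk => ?_⟩
  have := hN k hk
  rw [Real.dist_eq, sub_zero] at this
  rw [Real.dist_eq]
  calc |c k - L| ≤ e k := h k
  _ ≤ |e k| := le_abs_self _
  _ < δ := this

lemma extFn_ge {T : ℝ} (hT : 0 < T) (f : ℝ → ℝ) {u : ℝ} (hu : T ≤ u) :
    extFn T f u = f T := by
  unfold extFn
  rw [if_neg (by push_neg; linarith), if_neg (by push_neg; linarith)]

lemma extFn_neg {T : ℝ} (f : ℝ → ℝ) {u : ℝ} (hu : u < 0) : extFn T f u = 0 := by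
  unfold extFn
  rw [if_pos hu]

lemma extFn_mid {T : ℝ} (f : ℝ → ℝ) {u : ℝ} (h0 : 0 ≤ u) (hT : u < T) :
    extFn T f u = f u := by
  unfold extFn
  rw [if_neg (not_lt.2 h0), if_pos hT]

end SkAux
namespace SkAux

lemma completeness {T ε : ℝ} (hT : 0 < T) (hε : 0 < ε) (x : ℕ → ℝ → ℝ)
    (hx : ∀ n, Cadlag T (x n))
    (hcauchy : ∀ δ > (0:ℝ), ∃ N : ℕ, ∀ m ≥ N, ∀ n ≥ N, dmJ T ε (x m) (x n) < δ) :
    ∃ x₀ : ℝ → ℝ, Cadlag T x₀ ∧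
      Filter.Tendsto (fun n => dmJ T ε (x n) x₀) Filter.atTop (nhds 0) := by
  classical
  set a := -ε with hadef
  set b := T + ε with hbdef
  have hab : a < b := by rw [hadef, hbdef]; linarith
  have ha0 : a < 0 := by rw [hadef]; linarith
  have hTb : T < b := by rw [hbdef]; linarith
  have hba : 0 < b - a := by linarith
  -- subsequence selection
  have hsel : ∀ k : ℕ, ∃ N : ℕ, ∀ m ≥ N, ∀ n ≥ N, dmJ T ε (x m) (x n) < (1/2:ℝ)^k :=
    fun k => hcauchy _ (by positivity)
  choose N hN using hsel
  set φ : ℕ → ℕ := fun k => (Finset.range (k+1)).sup N + k with hφdef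
  have hφk : ∀ k, k ≤ φ k := fun k => by
    show k ≤ (Finset.range (k+1)).sup N + k
    omega
  have hφN : ∀ k, N k ≤ φ k := by
    intro k
    show N k ≤ (Finset.range (k+1)).sup N + k
    have := Finset.le_sup (f := N) (Finset.mem_range.2 (show k < k + 1 by omega))
    omega
  have hφmono : ∀ k, φ k ≤ φ (k+1) := by
    intro k
    show (Finset.range (k+1)).sup N + k ≤ (Finset.range (k+2)).sup N + (k+1)
    have : (Finset.range (k+1)).sup N ≤ (Finset.range (k+2)).sup N :=
      Finset.sup_mono (by intro i hi; simp only [Finset.mem_range] at *; omega)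
    omega
  set y : ℕ → ℝ → ℝ := fun k => extFn T (x (φ k)) with hydef
  have hdk : ∀ k, dmJ T ε (x (φ k)) (x (φ (k+1))) < (1/2:ℝ)^k := by
    intro k
    exact hN k (φ k) (hφN k) (φ (k+1)) (le_trans (hφN k) (hφmono k))
  have hSne : ∀ j k : ℕ, (SkSet a b (y j) (y k)).Nonempty :=
    fun j k => SkSet_nonempty hT hε (hx _) (hx _)
  have hrsel : ∀ k, ∃ r ∈ SkSet a b (y k) (y (k+1)), r < (1/2:ℝ)^k := by
    intro k
    refine exists_lt_of_csInf_lt (hSne k (k+1)) ?_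
    exact hdk k
  choose r hrS hrlt using hrsel
  have hr0 : ∀ k, 0 ≤ r k := fun k => (hrS k).1
  have hr1 : ∀ k, r k ≤ 1 := by
    intro k
    have h2 : ((1:ℝ)/2)^k ≤ 1 := by
      apply pow_le_one₀ <;> norm_num
    linarith [(hrlt k).le]
  have hlamsel : ∀ k, ∃ l : ℝ → ℝ, GoodTC a b (r k) l ∧
      ∀ t ∈ Set.Icc a b, |y k t - y (k+1) (l t)| ≤ r k := by
    intro k
    obtain ⟨h0, l, htc, hlog, hsup⟩ := hrS k
    exact ⟨l, ⟨h0, htc, sand_of_log htc.2.1 hlog⟩, hsup⟩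
  choose lam hlamG hlamS using hlamsel
  -- iterated compositions
  set D : ℕ → ℕ → ℝ → ℝ := fun k =>
    fun j => Nat.rec id (fun j' Dj => lam (k + j') ∘ Dj) j with hDdef
  have hD0 : ∀ k, D k 0 = id := fun k => rfl
  have hDsucc : ∀ k j, D k (j+1) = lam (k + j) ∘ D k j := fun k j => rfl
  have hDeq : ∀ k j, D k (j+1) = D (k+1) j ∘ lam k := by
    intro k j
    induction j with
    | zero =>
      rw [hDsucc k 0, hD0 k, hD0 (k+1)]
      funext t
      simp
    | succ m ih =>
      funext t
      have e1 : D k (m+2) = lam (k + (m+1)) ∘ D k (m+1) := hDsucc k (m+1)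
      have e2 : D (k+1) (m+1) = lam ((k+1) + m) ∘ D (k+1) m := hDsucc (k+1) m
      rw [e1, ih, e2]
      simp only [Function.comp_apply]
      rw [show k + (m + 1) = k + 1 + m from by omega]
  set B : ℕ → ℝ := fun k => 2 * (1/2:ℝ)^k with hBdef
  have hB0 : ∀ k, 0 < B k := by intro k; rw [hBdef]; positivity
  have hDgood : ∀ k j, GoodTC a b (∑ i ∈ Finset.range j, r (k + i)) (D k j) := by
    intro k j
    induction j with
    | zero =>
      rw [hD0]
      simpa using goodTC_id a b
    | succ m ih =>
      rw [hDsucc]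
      have := ih.comp (hlamG (k + m))
      rwa [← Finset.sum_range_succ] at this
  have hSsum : ∀ k j, ∑ i ∈ Finset.range j, r (k + i) ≤ B k := by
    intro k j
    rw [hBdef]
    calc ∑ i ∈ Finset.range j, r (k + i) ≤ ∑ i ∈ Finset.range j, (1/2:ℝ)^(k+i) := by
          apply Finset.sum_le_sum
          intro i _
          exact (hrlt (k+i)).le
    _ = (1/2:ℝ)^k * ∑ i ∈ Finset.range j, (1/2:ℝ)^i := by
          rw [Finset.mul_sum]
          apply Finset.sum_congr rfl
          intro i _
          rw [pow_add]
    _ ≤ (1/2:ℝ)^k * 2 := by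
          apply mul_le_mul_of_nonneg_left (geom_half_le j) (by positivity)
    _ = 2 * (1/2:ℝ)^k := by ring
  have hDgoodB : ∀ k j, GoodTC a b (B k) (D k j) :=
    fun k j => (hDgood k j).mono (hSsum k j)
  have hDmaps : ∀ k j, Set.MapsTo (D k j) (Set.Icc a b) (Set.Icc a b) :=
    fun k j => (hDgoodB k j).mapsTo
  -- D is pointwise Cauchy in j
  have hDstep : ∀ k j, ∀ t ∈ Set.Icc a b,
      |D k (j+1) t - D k j t| ≤ (b - a) * 3 * (1/2:ℝ)^(k+j) := by
    intro k j t ht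
    have hs : D k j t ∈ Set.Icc a b := hDmaps k j ht
    have h1 : |lam (k+j) (D k j t) - D k j t| ≤ (b - a) * (Real.exp (r (k+j)) - 1) :=
      (hlamG (k+j)).dist_le hs
    have h2 : Real.exp (r (k+j)) - 1 ≤ 3 * r (k+j) := exp_sub_one_le (hr0 _) (hr1 _)
    have h3 : r (k+j) ≤ (1/2:ℝ)^(k+j) := (hrlt _).le
    rw [hDsucc]
    simp only [Function.comp_apply]
    calc |lam (k+j) (D k j t) - D k j t| ≤ (b - a) * (Real.exp (r (k+j)) - 1) := h1
    _ ≤ (b - a) * (3 * (1/2:ℝ)^(k+j)) := by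
        apply mul_le_mul_of_nonneg_left _ hba.le
        linarith
    _ = (b - a) * 3 * (1/2:ℝ)^(k+j) := by ring
  have hDcauchy : ∀ k, ∀ t ∈ Set.Icc a b, CauchySeq (fun j => D k j t) := by
    intro k t ht
    apply cauchySeq_of_le_geometric (1/2 : ℝ) ((b-a) * 3 * (1/2:ℝ)^k) (by norm_num)
    intro j
    rw [Real.dist_eq]
    calc |D k j t - D k (j+1) t| = |D k (j+1) t - D k j t| := abs_sub_comm _ _
    _ ≤ (b - a) * 3 * (1/2:ℝ)^(k+j) := hDstep k j t ht
    _ = (b-a) * 3 * (1/2:ℝ)^k * (1/2:ℝ)^j := by rw [pow_add]; ring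
  set μ : ℕ → ℝ → ℝ := fun k t => limUnder Filter.atTop (fun j => D k j t) with hμdef
  have hμtend : ∀ k, ∀ t ∈ Set.Icc a b,
      Filter.Tendsto (fun j => D k j t) Filter.atTop (nhds (μ k t)) := by
    intro k t ht
    obtain ⟨l, hl⟩ := cauchySeq_tendsto_of_complete (hDcauchy k t ht)
    rwa [show μ k t = l from hl.limUnder_eq]
  have hμsand : ∀ k, Sand a b (B k) (μ k) := by
    intro k s hs t ht hst
    have h1 := (hμtend k t ht).sub (hμtend k s hs)
    constructor
    · refine ge_of_tendsto h1 ?_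
      filter_upwards with j
      exact ((hDgoodB k j).2.2 s hs t ht hst).1
    · refine le_of_tendsto h1 ?_
      filter_upwards with j
      exact ((hDgoodB k j).2.2 s hs t ht hst).2
  have hDa : ∀ k j, D k j a = a := fun k j => (hDgoodB k j).2.1.2.2.1
  have hDb : ∀ k j, D k j b = b := fun k j => (hDgoodB k j).2.1.2.2.2.1
  have hμa : ∀ k, μ k a = a := by
    intro k
    have : Filter.Tendsto (fun j => D k j a) Filter.atTop (nhds a) := by
      apply Filter.Tendsto.congr (fun j => (hDa k j).symm)
      exact tendsto_const_nhds
    exact this.limUnder_eq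
  have hμb : ∀ k, μ k b = b := by
    intro k
    have : Filter.Tendsto (fun j => D k j b) Filter.atTop (nhds b) := by
      apply Filter.Tendsto.congr (fun j => (hDb k j).symm)
      exact tendsto_const_nhds
    exact this.limUnder_eq
  have hμmaps : ∀ k, Set.MapsTo (μ k) (Set.Icc a b) (Set.Icc a b) := by
    intro k t ht
    constructor
    · refine ge_of_tendsto (hμtend k t ht) ?_
      filter_upwards with j
      exact (hDmaps k j ht).1
    · refine le_of_tendsto (hμtend k t ht) ?_
      filter_upwards with j
      exact (hDmaps k j ht).2
  have hμmono : ∀ k, StrictMonoOn (μ k) (Set.Icc a b) := by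
    intro k s hs t ht hst
    have := (hμsand k s hs t ht hst).1
    have he : 0 < Real.exp (-(B k)) * (t - s) := by
      apply mul_pos (Real.exp_pos _)
      linarith
    linarith
  have hμgood : ∀ k, GoodTC a b (B k) (μ k) := by
    intro k
    exact ⟨(hB0 k).le, ⟨sand_continuousOn (hμsand k), hμmono k, hμa k, hμb k, hμmaps k⟩,
      hμsand k⟩
  have hμlam : ∀ k, ∀ t ∈ Set.Icc a b, μ k t = μ (k+1) (lam k t) := by
    intro k t ht
    have hlt : lam k t ∈ Set.Icc a b := (hlamG k).mapsTo ht
    have h1 : Filter.Tendsto (fun j => D (k+1) j (lam k t)) Filter.atTop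
        (nhds (μ (k+1) (lam k t))) := hμtend (k+1) _ hlt
    have h2 : Filter.Tendsto (fun j => D k (j+1) t) Filter.atTop (nhds (μ k t)) :=
      (hμtend k t ht).comp (Filter.tendsto_add_atTop_nat 1)
    have he : (fun j => D k (j+1) t) = (fun j => D (k+1) j (lam k t)) := by
      funext j
      rw [hDeq k j]
      rfl
    rw [he] at h2
    exact tendsto_nhds_unique h2 h1
  -- inverses
  have hνsel : ∀ k, ∃ g : ℝ → ℝ, GoodTC a b (B k) g ∧
      (∀ t ∈ Set.Icc a b, g (μ k t) = t) ∧ (∀ t ∈ Set.Icc a b, μ k (g t) = t) :=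
    fun k => (hμgood k).inverse hab
  choose ν hνG hνμ hμν using hνsel
  -- limits of values
  have hWcauchy : ∀ k, ∀ t ∈ Set.Icc a b, CauchySeq (fun j => y (k+j) (D k j t)) := by
    intro k t ht
    apply cauchySeq_of_le_geometric (1/2 : ℝ) ((1/2:ℝ)^k) (by norm_num)
    intro j
    rw [Real.dist_eq]
    have hs : D k j t ∈ Set.Icc a b := hDmaps k j ht
    have h1 := hlamS (k+j) (D k j t) hs
    calc |y (k+j) (D k j t) - y (k+(j+1)) (D k (j+1) t)| =
        |y (k+j) (D k j t) - y ((k+j)+1) (lam (k+j) (D k j t))| := by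
          rw [hDsucc]
          simp only [Function.comp_apply]
          rw [show k + (j+1) = (k+j)+1 from by omega]
    _ ≤ r (k+j) := h1
    _ ≤ (1/2:ℝ)^(k+j) := (hrlt _).le
    _ = (1/2:ℝ)^k * (1/2:ℝ)^j := pow_add _ _ _
  set W : ℕ → ℝ → ℝ := fun k t => limUnder Filter.atTop (fun j => y (k+j) (D k j t))
    with hWdef
  have hWtend : ∀ k, ∀ t ∈ Set.Icc a b,
      Filter.Tendsto (fun j => y (k+j) (D k j t)) Filter.atTop (nhds (W k t)) := by
    intro k t ht
    obtain ⟨l, hl⟩ := cauchySeq_tendsto_of_complete (hWcauchy k t ht)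
    rwa [show W k t = l from hl.limUnder_eq]
  have hWyj : ∀ k, ∀ t ∈ Set.Icc a b, ∀ j,
      |y (k+j) (D k j t) - y k t| ≤ ∑ i ∈ Finset.range j, r (k+i) := by
    intro k t ht j
    induction j with
    | zero => simp [hD0]
    | succ m ih =>
      have hs : D k m t ∈ Set.Icc a b := hDmaps k m ht
      have h1 := hlamS (k+m) (D k m t) hs
      rw [Finset.sum_range_succ]
      have e1 : y (k+(m+1)) (D k (m+1) t) = y ((k+m)+1) (lam (k+m) (D k m t)) := by
        rw [hDsucc]
        simp only [Function.comp_apply]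
        rw [show k + (m+1) = (k+m)+1 from by omega]
      rw [e1]
      calc |y ((k+m)+1) (lam (k+m) (D k m t)) - y k t| ≤
          |y ((k+m)+1) (lam (k+m) (D k m t)) - y (k+m) (D k m t)| +
          |y (k+m) (D k m t) - y k t| := abs_sub_le _ _ _
      _ ≤ r (k+m) + ∑ i ∈ Finset.range m, r (k+i) := by
          refine add_le_add ?_ ih
          rw [abs_sub_comm]
          exact h1
      _ = ∑ i ∈ Finset.range m, r (k+i) + r (k+m) := by ring
  have hWy : ∀ k, ∀ t ∈ Set.Icc a b, |W k t - y k t| ≤ B k := by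
    intro k t ht
    have h1 : Filter.Tendsto (fun j => |y (k+j) (D k j t) - y k t|) Filter.atTop
        (nhds (|W k t - y k t|)) := ((hWtend k t ht).sub tendsto_const_nhds).abs
    refine le_of_tendsto h1 ?_
    filter_upwards with j
    exact le_trans (hWyj k t ht j) (hSsum k j)
  have hWlam : ∀ k, ∀ t ∈ Set.Icc a b, W k t = W (k+1) (lam k t) := by
    intro k t ht
    have hlt : lam k t ∈ Set.Icc a b := (hlamG k).mapsTo ht
    have h1 : Filter.Tendsto (fun j => y ((k+1)+j) (D (k+1) j (lam k t))) Filter.atTop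
        (nhds (W (k+1) (lam k t))) := hWtend (k+1) _ hlt
    have h2 : Filter.Tendsto (fun j => y (k+(j+1)) (D k (j+1) t)) Filter.atTop
        (nhds (W k t)) := (hWtend k t ht).comp (Filter.tendsto_add_atTop_nat 1)
    have he : (fun j => y (k+(j+1)) (D k (j+1) t)) =
        (fun j => y ((k+1)+j) (D (k+1) j (lam k t))) := by
      funext j
      rw [hDeq k j]
      simp only [Function.comp_apply]
      rw [show k + (j+1) = (k+1)+j from by omega]
    rw [he] at h2
    exact tendsto_nhds_unique h2 h1
  -- chain identities
  have hchain : ∀ k, ∀ t ∈ Set.Icc a b, μ 0 t = μ k (D 0 k t) ∧ W 0 t = W k (D 0 k t) := by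
    intro k
    induction k with
    | zero => intro t ht; exact ⟨rfl, rfl⟩
    | succ m ih =>
      intro t ht
      obtain ⟨ih1, ih2⟩ := ih t ht
      have hs : D 0 m t ∈ Set.Icc a b := hDmaps 0 m ht
      have e1 : D 0 (m+1) t = lam m (D 0 m t) := by
        rw [hDsucc]
        simp only [Function.comp_apply]
        rw [show 0 + m = m from by omega]
      constructor
      · rw [ih1, hμlam m _ hs, e1]
      · rw [ih2, hWlam m _ hs, e1]
  -- the limit function
  set z : ℝ → ℝ := fun t => W 0 (ν 0 t) with hzdef
  have hz : ∀ k, ∀ t ∈ Set.Icc a b, z (μ k t) = W k t := by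
    intro k t ht
    have hμkt : μ k t ∈ Set.Icc a b := hμmaps k ht
    set s₀ := ν 0 (μ k t) with hs₀
    have hs₀I : s₀ ∈ Set.Icc a b := (hνG 0).mapsTo hμkt
    have hμ0s₀ : μ 0 s₀ = μ k t := hμν 0 _ hμkt
    set u := D 0 k s₀ with hu
    have huI : u ∈ Set.Icc a b := hDmaps 0 k hs₀I
    have hμku : μ k u = μ k t := by
      rw [hu, ← (hchain k s₀ hs₀I).1, hμ0s₀]
    have hut : u = t := (hμmono k).injOn huI ht hμku
    calc z (μ k t) = W 0 s₀ := rfl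
    _ = W k u := (hchain k s₀ hs₀I).2
    _ = W k t := by rw [hut]
  have hsupz : ∀ k, ∀ t ∈ Set.Icc a b, |y k t - z (μ k t)| ≤ B k := by
    intro k t ht
    rw [hz k t ht, abs_sub_comm]
    exact hWy k t ht
  -- uniform approximation of z
  have huz : ∀ k, ∀ t ∈ Set.Icc a b, |z t - y k (ν k t)| ≤ B k := by
    intro k t ht
    have hνt : ν k t ∈ Set.Icc a b := (hνG k).mapsTo ht
    have h1 : z t = W k (ν k t) := by
      conv_lhs => rw [show t = μ k (ν k t) from (hμν k t ht).symm]
      exact hz k _ hνt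
    rw [h1]
    exact hWy k _ hνt
  have hBtend : Filter.Tendsto B Filter.atTop (nhds 0) := by
    rw [hBdef]
    have h1 : Filter.Tendsto (fun k => (1/2:ℝ)^k) Filter.atTop (nhds 0) :=
      tendsto_pow_atTop_nhds_zero_of_lt_one (by norm_num) (by norm_num)
    have := h1.const_mul (2:ℝ)
    simpa using this
  have hνdisp : ∀ k, ∀ t ∈ Set.Icc a b, |ν k t - t| ≤ (b-a) * (Real.exp (B k) - 1) :=
    fun k t ht => (hνG k).dist_le ht
  have hdispt : Filter.Tendsto (fun k => (b-a) * (Real.exp (B k) - 1)) Filter.atTop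
      (nhds 0) := by
    have h1 : Filter.Tendsto (fun k => Real.exp (B k)) Filter.atTop (nhds (Real.exp 0)) :=
      (Real.continuous_exp.tendsto 0).comp hBtend
    rw [Real.exp_zero] at h1
    have h2 := (h1.sub (tendsto_const_nhds (x := (1:ℝ)))).const_mul (b-a)
    simpa using h2
  -- structure of z
  have hz_neg : ∀ t, a ≤ t → t < 0 → z t = 0 := by
    intro t hat ht0
    by_contra hne
    have hc : 0 < |z t| := abs_pos.2 hne
    obtain ⟨N1, hN1⟩ := Metric.tendsto_atTop.1 hBtend (|z t|) hc
    obtain ⟨N2, hN2⟩ := Metric.tendsto_atTop.1 hdispt (-t) (by linarith)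
    set k := max N1 N2 with hk
    have hb1 : B k < |z t| := by
      have := hN1 k (le_max_left _ _)
      rw [Real.dist_eq, sub_zero] at this
      calc B k ≤ |B k| := le_abs_self _
      _ < |z t| := this
    have hb2 : (b-a) * (Real.exp (B k) - 1) < -t := by
      have := hN2 k (le_max_right _ _)
      rw [Real.dist_eq, sub_zero] at this
      calc (b-a) * (Real.exp (B k) - 1) ≤ |(b-a) * (Real.exp (B k) - 1)| := le_abs_self _
      _ < -t := this
    have htI : t ∈ Set.Icc a b := ⟨hat, by linarith⟩
    have hν1 : ν k t < 0 := by
      have := hνdisp k t htI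
      rw [abs_le] at this
      linarith [this.2]
    have hy0 : y k (ν k t) = 0 := extFn_neg _ hν1
    have := huz k t htI
    rw [hy0, sub_zero] at this
    linarith
  have hz_const : ∀ t t', T < t → t ≤ b → T < t' → t' ≤ b → z t = z t' := by
    intro t t' h1 h2 h3 h4
    by_contra hne
    have hc : 0 < |z t - z t'| := abs_pos.2 (sub_ne_zero.2 hne)
    obtain ⟨N1, hN1⟩ := Metric.tendsto_atTop.1 hBtend (|z t - z t'|/4) (by linarith)
    obtain ⟨N2, hN2⟩ := Metric.tendsto_atTop.1 hdispt (min (t - T) (t' - T)) (by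
      apply lt_min <;> linarith)
    set k := max N1 N2 with hk
    have hb1 : B k < |z t - z t'|/4 := by
      have := hN1 k (le_max_left _ _)
      rw [Real.dist_eq, sub_zero] at this
      calc B k ≤ |B k| := le_abs_self _
      _ < _ := this
    have hb2 : (b-a) * (Real.exp (B k) - 1) < min (t - T) (t' - T) := by
      have := hN2 k (le_max_right _ _)
      rw [Real.dist_eq, sub_zero] at this
      calc (b-a) * (Real.exp (B k) - 1) ≤ |(b-a) * (Real.exp (B k) - 1)| := le_abs_self _
      _ < _ := this
    have htI : t ∈ Set.Icc a b := ⟨by linarith, h2⟩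
    have ht'I : t' ∈ Set.Icc a b := ⟨by linarith, h4⟩
    have hν1 : T ≤ ν k t := by
      have := hνdisp k t htI
      rw [abs_le] at this
      have := this.1
      have h5 : (b-a) * (Real.exp (B k) - 1) < t - T := lt_of_lt_of_le hb2 (min_le_left _ _)
      linarith
    have hν2 : T ≤ ν k t' := by
      have := hνdisp k t' ht'I
      rw [abs_le] at this
      have := this.1
      have h5 : (b-a) * (Real.exp (B k) - 1) < t' - T :=
        lt_of_lt_of_le hb2 (min_le_right _ _)
      linarith
    have hy1 : y k (ν k t) = x (φ k) T := extFn_ge hT _ hν1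
    have hy2 : y k (ν k t') = x (φ k) T := extFn_ge hT _ hν2
    have e1 := huz k t htI
    have e2 := huz k t' ht'I
    rw [hy1] at e1
    rw [hy2] at e2
    have : |z t - z t'| ≤ B k + B k := by
      calc |z t - z t'| ≤ |z t - x (φ k) T| + |x (φ k) T - z t'| := abs_sub_le _ _ _
      _ ≤ B k + B k := add_le_add e1 (by rw [abs_sub_comm]; exact e2)
    linarith
  -- one-sided limits of the approximants
  have hfk_right : ∀ k, ∀ u, u ∈ Set.Ico a b →
      Filter.Tendsto (fun s => y k (ν k s)) (nhdsWithin u (Set.Ioo u b))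
        (nhds (y k (ν k u))) := by
    intro k u hu
    have t1 := tc_tendsto_right (hνG k).2.1 hu
    have t2 := extFn_right (hx (φ k)) hT (ν k u)
    exact t2.comp t1
  have hfk_left : ∀ k, ∀ u, u ∈ Set.Ioc a b →
      ∃ L, Filter.Tendsto (fun s => y k (ν k s)) (nhdsWithin u (Set.Ioo a u)) (nhds L) := by
    intro k u hu
    have t1 := tc_tendsto_left (hνG k).2.1 hu
    obtain ⟨L, hL⟩ := extFn_left (hx (φ k)) hT (ν k u)
    exact ⟨L, hL.comp t1⟩
  have hFne_r : ∀ u, u < b → (nhdsWithin u (Set.Ioo u b)).NeBot := by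
    intro u hub
    rw [nhdsWithin_Ioo_eq_nhdsGT hub]
    infer_instance
  have hFne_l : ∀ u, a < u → (nhdsWithin u (Set.Ioo a u)).NeBot := by
    intro u hau
    rw [nhdsWithin_Ioo_eq_nhdsLT hau]
    infer_instance
  have hb_unif_r : ∀ u, u ∈ Set.Icc a b → ∀ k,
      ∀ᶠ s in nhdsWithin u (Set.Ioo u b), |z s - y k (ν k s)| ≤ B k := by
    intro u hu k
    filter_upwards [self_mem_nhdsWithin] with s hs
    exact huz k s ⟨le_trans hu.1 hs.1.le, hs.2.le⟩
  have hb_unif_l : ∀ u, u ∈ Set.Icc a b → ∀ k,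
      ∀ᶠ s in nhdsWithin u (Set.Ioo a u), |z s - y k (ν k s)| ≤ B k := by
    intro u hu k
    filter_upwards [self_mem_nhdsWithin] with s hs
    exact huz k s ⟨hs.1.le, le_trans hs.2.le hu.2⟩
  -- right-continuity of z on [a, b)
  have hz_right : ∀ u, u ∈ Set.Ico a b →
      Filter.Tendsto z (nhdsWithin u (Set.Ioo u b)) (nhds (z u)) := by
    intro u hu
    haveI := hFne_r u hu.2
    obtain ⟨L, hcL, hzL⟩ := exch hBtend (fun k => hfk_right k u hu)
      (fun k => hb_unif_r u ⟨hu.1, hu.2.le⟩ k)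
    have hcz : Filter.Tendsto (fun k => y k (ν k u)) Filter.atTop (nhds (z u)) := by
      apply tendsto_of_dist_le hBtend
      intro k
      rw [abs_sub_comm]
      exact huz k u ⟨hu.1, hu.2.le⟩
    rwa [tendsto_nhds_unique hcL hcz] at hzL
  -- left limits of z on (a, b]
  have hz_left : ∀ u, u ∈ Set.Ioc a b →
      ∃ L, Filter.Tendsto z (nhdsWithin u (Set.Ioo a u)) (nhds L) := by
    intro u hu
    haveI := hFne_l u hu.1
    set c : ℕ → ℝ := fun k => (hfk_left k u hu).choose with hcdef
    have hck : ∀ k, Filter.Tendsto (fun s => y k (ν k s)) (nhdsWithin u (Set.Ioo a u))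
        (nhds (c k)) := fun k => (hfk_left k u hu).choose_spec
    obtain ⟨L, _, hzL⟩ := exch hBtend hck (fun k => hb_unif_l u ⟨hu.1.le, hu.2⟩ k)
    exact ⟨L, hzL⟩
  -- z is càdlàg
  have hzc : Cadlag T z := by
    constructor
    · intro u hu
      have h1 := hz_right u ⟨by linarith [hu.1], by linarith [hu.2]⟩
      rwa [nhdsWithin_Ioo_eq_nhdsGT (by linarith [hu.2] : u < b)] at h1
    · intro u hu
      obtain ⟨L, hL⟩ := hz_left u ⟨by linarith [hu.1], by linarith [hu.2]⟩
      refine ⟨L, ?_⟩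
      rwa [nhdsWithin_Ioo_eq_nhdsLT (by linarith [hu.1] : a < u)] at hL
  -- z equals its extension on [a, b]
  have hzT_const : ∀ t, T < t → t ≤ b → z t = z T := by
    intro t h1 h2
    have hc0 : z t = z (T + (b - T)/2) := hz_const t _ h1 h2 (by linarith) (by linarith)
    have hrc := hz_right T ⟨by linarith, hTb⟩
    have hconst : Filter.Tendsto z (nhdsWithin T (Set.Ioo T b)) (nhds (z t)) := by
      haveI := hFne_r T hTb
      apply Filter.Tendsto.congr' (f₁ := fun _ => z t)
      · filter_upwards [self_mem_nhdsWithin] with s hs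
        exact hz_const t s h1 h2 hs.1 hs.2.le
      · exact tendsto_const_nhds
    haveI := hFne_r T hTb
    exact tendsto_nhds_unique hconst hrc
  have hext_z : ∀ w ∈ Set.Icc a b, extFn T z w = z w := by
    intro w hw
    rcases lt_or_ge w 0 with h1 | h1
    · rw [extFn_neg _ h1, hz_neg w hw.1 h1]
    · rcases lt_or_ge w T with h2 | h2
      · rw [extFn_mid _ h1 h2]
      · rw [extFn_ge hT _ h2]
        rcases eq_or_lt_of_le h2 with h3 | h3
        · rw [← h3]
        · rw [hzT_const w h3 hw.2]
  -- distance bound along the subsequence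
  have hkey : ∀ k, dmJ T ε (x (φ k)) z ≤ B k := by
    intro k
    have hsup : ∀ t ∈ Set.Icc a b, |y k t - extFn T z (μ k t)| ≤ B k := by
      intro t ht
      rw [hext_z _ (hμmaps k ht)]
      exact hsupz k t ht
    have := dSk_le_of_good (hμgood k) (hB0 k).le hsup
    rw [max_self] at this
    exact this
  -- conclusion
  refine ⟨z, hzc, ?_⟩
  rw [Metric.tendsto_atTop]
  intro δ hδ
  obtain ⟨N0, hN0⟩ := hcauchy (δ/2) (by linarith)
  obtain ⟨K0, hK0⟩ := Metric.tendsto_atTop.1 hBtend (δ/2) (by linarith)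
  set K := max N0 K0 with hK
  have hBK : B K < δ/2 := by
    have := hK0 K (le_max_right _ _)
    rw [Real.dist_eq, sub_zero] at this
    calc B K ≤ |B K| := le_abs_self _
    _ < δ/2 := this
  refine ⟨N0, fun n hn => ?_⟩
  have htri : dmJ T ε (x n) z ≤ dmJ T ε (x n) (x (φ K)) + dmJ T ε (x (φ K)) z := by
    apply dSk_triangle
    · exact SkSet_nonempty hT hε (hx n) (hx (φ K))
    · exact SkSet_nonempty hT hε (hx (φ K)) hzc
  have h1 : dmJ T ε (x n) (x (φ K)) < δ/2 := by
    apply hN0 n hn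
    calc N0 ≤ K := le_max_left _ _
    _ ≤ φ K := hφk K
  have h2 : dmJ T ε (x (φ K)) z ≤ B K := hkey K
  rw [Real.dist_eq, sub_zero, abs_of_nonneg (show (0:ℝ) ≤ dmJ T ε (x n) z from dSk_nonneg _ _ _ _)]
  calc dmJ T ε (x n) z ≤ _ := htri
  _ < δ/2 + δ/2 := by
      apply add_lt_add_of_lt_of_le h1
      linarith
  _ = δ := by ring

end SkAux
/-- Theorem 4.8 (i): `(D([0,T]), d)` is a Polish (complete separable) metric space;
here two elements of `D([0,T])` are identified when they agree on `[0,T]`. -/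
theorem stmt8 (T : ℝ) (hT : 0 < T) (ε : ℝ) (hε : 0 < ε) :
    (∀ x y : ℝ → ℝ, Cadlag T x → Cadlag T y → 0 ≤ dmJ T ε x y) ∧
    (∀ x y : ℝ → ℝ, Cadlag T x → Cadlag T y →
      (dmJ T ε x y = 0 ↔ ∀ t ∈ Set.Icc (0:ℝ) T, x t = y t)) ∧
    (∀ x y : ℝ → ℝ, Cadlag T x → Cadlag T y → dmJ T ε x y = dmJ T ε y x) ∧
    (∀ x y z : ℝ → ℝ, Cadlag T x → Cadlag T y → Cadlag T z →
      dmJ T ε x z ≤ dmJ T ε x y + dmJ T ε y z) ∧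
    (∀ x : ℕ → ℝ → ℝ, (∀ n, Cadlag T (x n)) →
      (∀ δ > (0:ℝ), ∃ N : ℕ, ∀ m ≥ N, ∀ n ≥ N, dmJ T ε (x m) (x n) < δ) →
      ∃ x₀ : ℝ → ℝ, Cadlag T x₀ ∧
        Filter.Tendsto (fun n => dmJ T ε (x n) x₀) Filter.atTop (nhds 0)) ∧
    (∃ C : Set (ℝ → ℝ), C.Countable ∧ (∀ y ∈ C, Cadlag T y) ∧
      ∀ x : ℝ → ℝ, Cadlag T x → ∀ δ > (0:ℝ), ∃ y ∈ C, dmJ T ε x y < δ) := by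
  refine ⟨?_, ?_, ?_, ?_, ?_, ?_⟩
  · intro x y _ _
    exact SkAux.dSk_nonneg _ _ _ _
  · intro x y hx hy
    constructor
    · exact SkAux.eq_of_dmJ_zero hT hε hx hy
    · intro h
      show dSk (-ε) (T + ε) (extFn T x) (extFn T y) = 0
      rw [SkAux.extFn_congr h hT.le]
      exact SkAux.dmJ_self hε y
  · intro x y _ _
    exact SkAux.dSk_symm (by linarith) _ _
  · intro x y z hx hy hz
    exact SkAux.dSk_triangle (SkAux.SkSet_nonempty hT hε hx hy)
      (SkAux.SkSet_nonempty hT hε hy hz)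
  · intro x hx hc
    exact SkAux.completeness hT hε x hx hc
  · exact ⟨SkAux.ratSteps, SkAux.ratSteps_countable, fun y hy => SkAux.ratSteps_cadlag y hy,
      fun x hx δ hδ => SkAux.separability hT hε x hx δ hδ⟩

end
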